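/- Let D be a complete, cocomplete, extremally co-well-powered, (extremal epi, mono) category. Then KD is an (extremal epi, mono) category. -/

import Mathlib

open CategoryTheory CategoryTheory.Limits

universe w v u v₂ u₂

namespace FilteredCats

variable {D : Type u} [Category.{v} D]

/-- The class of morphisms of `D` with source `X`. -/
def MorFrom (X : D) : Type (max u v) := Σ Y : D, X ⟶ Y

/-- `Dom δ₁ δ₂` means `δ₁ ≥ δ₂`: there is `h` with `h ∘ δ₁ = δ₂`. -/
def Dom {X : D} (δ₁ δ₂ : MorFrom X) : Prop :=
  ∃ h : δ₁.1 ⟶ δ₂.1, δ₁.2 ≫ h = δ₂.2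

/-- A projective filtration on `X`: a nonempty, directed, saturated class of
morphisms with source `X`. -/
structure ProjFilt (X : D) where
  carrier : Set (MorFrom X)
  nonempty' : carrier.Nonempty
  directed' : ∀ δ₁ ∈ carrier, ∀ δ₂ ∈ carrier, ∃ δ ∈ carrier, Dom δ δ₁ ∧ Dom δ δ₂
  saturated' : ∀ δ₁ ∈ carrier, ∀ δ₂, Dom δ₁ δ₂ → δ₂ ∈ carrier

/-- The pull back of a set of morphisms with source `X` along `f : X' ⟶ X`. -/
def pullSet {X' X : D} (f : X' ⟶ X) (S : Set (MorFrom X)) : Set (MorFrom X') :=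
  {δ' | ∃ δ ∈ S, δ' = ⟨δ.1, f ≫ δ.2⟩}

/-- The pull back of a projective filtration along `f : X' ⟶ X`. -/
def ProjFilt.pull {X' X : D} (f : X' ⟶ X) (P : ProjFilt X) : ProjFilt X' where
  carrier := pullSet f P.carrier
  nonempty' := by
    obtain ⟨δ, hδ⟩ := P.nonempty'
    exact ⟨⟨δ.1, f ≫ δ.2⟩, δ, hδ, rfl⟩
  directed' := by
    rintro _ ⟨δ₁, h₁, rfl⟩ _ ⟨δ₂, h₂, rfl⟩
    obtain ⟨δ, hδ, ⟨g₁, hg₁⟩, ⟨g₂, hg₂⟩⟩ := P.directed' δ₁ h₁ δ₂ h₂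
    exact ⟨⟨δ.1, f ≫ δ.2⟩, ⟨δ, hδ, rfl⟩,
      ⟨g₁, by simp [hg₁]⟩, ⟨g₂, by simp [hg₂]⟩⟩
  saturated' := by
    rintro _ ⟨δ, hδ, rfl⟩ δ₂ ⟨h, hh⟩
    refine ⟨⟨δ₂.1, δ.2 ≫ h⟩, P.saturated' δ hδ _ ⟨h, rfl⟩, ?_⟩
    obtain ⟨Y₂, g₂⟩ := δ₂
    have hg : g₂ = f ≫ (δ.2 ≫ h) := by simpa using hh.symm
    exact Sigma.ext rfl (heq_of_eq hg)

/-- A projectively filtered object of `D`. -/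
structure PObj (D : Type u) [Category.{v} D] where
  base : D
  filt : ProjFilt base

/-- A morphism of projectively filtered objects: a morphism of the underlying
objects such that the pull back of the target filtration is contained in the
source filtration. -/
structure PHom (A B : PObj D) : Type v where
  toHom : A.base ⟶ B.base
  mem : ∀ δ ∈ B.filt.carrier, (⟨δ.1, toHom ≫ δ.2⟩ : MorFrom A.base) ∈ A.filt.carrier

theorem PHom.ext' {A B : PObj D} {f g : PHom A B} (h : f.toHom = g.toHom) : f = g := by
  cases f; cases g; cases h; rfl

instance : Category.{v} (PObj D) where
  Hom := PHom
  id A := ⟨𝟙 A.base, fun δ hδ => by rw [Category.id_comp]; exact hδ⟩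
  comp {A B C} f g := ⟨f.toHom ≫ g.toHom, fun δ hδ => by
    have h1 := g.mem δ hδ
    have h2 := f.mem _ h1
    simpa using h2⟩
  id_comp f := PHom.ext' (Category.id_comp _)
  comp_id f := PHom.ext' (Category.comp_id _)
  assoc f g h := PHom.ext' (Category.assoc _ _ _)

@[simp] theorem PObj.id_toHom (A : PObj D) : PHom.toHom (𝟙 A) = 𝟙 A.base := rfl
@[simp] theorem PObj.comp_toHom {A B C : PObj D} (f : A ⟶ B) (g : B ⟶ C) :
    PHom.toHom (f ≫ g) = PHom.toHom f ≫ PHom.toHom g := rfl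

/-- The forgetful functor `PD → D`. -/
def Pforget (D : Type u) [Category.{v} D] : PObj D ⥤ D where
  obj A := A.base
  map f := PHom.toHom f

/-- The discrete filtration functor `D → PD`, `X ↦ (X, M(X))`. -/
def Pdiscrete (D : Type u) [Category.{v} D] : D ⥤ PObj D where
  obj X :=
    { base := X
      filt :=
        { carrier := Set.univ
          nonempty' := ⟨⟨X, 𝟙 X⟩, trivial⟩
          directed' := fun δ₁ _ δ₂ _ =>
            ⟨⟨X, 𝟙 X⟩, trivial, ⟨δ₁.2, Category.id_comp _⟩, ⟨δ₂.2, Category.id_comp _⟩⟩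
          saturated' := fun _ _ _ _ => trivial } }
  map f := ⟨f, fun _ _ => trivial⟩

/-- The functor `PD → PE` induced by a functor `G : D → E`. -/
def Pfunctor {E : Type u₂} [Category.{v₂} E] (G : D ⥤ E) : PObj D ⥤ PObj E where
  obj A :=
    { base := G.obj A.base
      filt :=
        { carrier := {δ' | ∃ δ ∈ A.filt.carrier,
            Dom (⟨G.obj δ.1, G.map δ.2⟩ : MorFrom (G.obj A.base)) δ'}
          nonempty' := by
            obtain ⟨δ, hδ⟩ := A.filt.nonempty'
            exact ⟨⟨G.obj δ.1, G.map δ.2⟩, δ, hδ, ⟨𝟙 _, Category.comp_id _⟩⟩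
          directed' := by
            rintro δ'₁ ⟨δ₁, h₁, g₁, hg₁⟩ δ'₂ ⟨δ₂, h₂, g₂, hg₂⟩
            obtain ⟨δ, hδ, ⟨k₁, hk₁⟩, ⟨k₂, hk₂⟩⟩ := A.filt.directed' δ₁ h₁ δ₂ h₂
            refine ⟨⟨G.obj δ.1, G.map δ.2⟩, ⟨δ, hδ, ⟨𝟙 _, Category.comp_id _⟩⟩,
              ⟨G.map k₁ ≫ g₁, ?_⟩, ⟨G.map k₂ ≫ g₂, ?_⟩⟩
            · rw [← Category.assoc, ← G.map_comp, hk₁, hg₁]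
            · rw [← Category.assoc, ← G.map_comp, hk₂, hg₂]
          saturated' := by
            rintro δ'₁ ⟨δ, hδ, g, hg⟩ δ'₂ ⟨h, hh⟩
            exact ⟨δ, hδ, ⟨g ≫ h, by rw [← Category.assoc, hg, hh]⟩⟩ } }
  map {A B} f :=
    ⟨G.map (PHom.toHom f), by
      rintro δ' ⟨δ, hδ, g, hg⟩
      exact ⟨⟨δ.1, PHom.toHom f ≫ δ.2⟩, f.mem δ hδ,
        ⟨g, by rw [← hg, ← Category.assoc, ← G.map_comp]⟩⟩⟩
  map_id A := PHom.ext' (G.map_id _)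
  map_comp f g := PHom.ext' (G.map_comp _ _)

/-- An extremal epimorphism: an epimorphism such that in any factorisation
through a monomorphism, the monomorphism is an isomorphism. -/
def ExtremalEpi {C : Type u₂} [Category.{v₂} C] {X Y : C} (e : X ⟶ Y) : Prop :=
  Epi e ∧ ∀ ⦃Z : C⦄ (g : X ⟶ Z) (m : Z ⟶ Y), Mono m → g ≫ m = e → IsIso m

/-- An (extremal epi, mono) category: every morphism factors as an extremal
epimorphism followed by a monomorphism and such factorisations have the
diagonal fill-in property. -/
structure EMCat (C : Type u₂) [Category.{v₂} C] : Prop where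
  fact : ∀ {X Y : C} (f : X ⟶ Y), ∃ (Z : C) (e : X ⟶ Z) (m : Z ⟶ Y),
    ExtremalEpi e ∧ Mono m ∧ e ≫ m = f
  diag : ∀ {A B Z X : C} (e : A ⟶ B) (m : Z ⟶ X) (g : A ⟶ Z) (h : B ⟶ X),
    ExtremalEpi e → Mono m → g ≫ m = e ≫ h → ∃ d : B ⟶ Z, e ≫ d = g ∧ d ≫ m = h

/-- A projective filtration is reduced if it has an initial subclass of
extremal epimorphisms. -/
def ProjFilt.Reduced {X : D} (P : ProjFilt X) : Prop :=
  ∀ δ ∈ P.carrier, ∃ ε ∈ P.carrier, ExtremalEpi ε.2 ∧ Dom ε δ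

/-- The category of reduced projectively filtered objects of `D`. -/
def QObj (D : Type u) [Category.{v} D] := ObjectProperty.FullSubcategory (fun A : PObj D => A.filt.Reduced)

instance : Category.{v} (QObj D) := ObjectProperty.FullSubcategory.category _

/-- The inclusion functor `QD → PD`. -/
def qpInclusion (D : Type u) [Category.{v} D] : QObj D ⥤ PObj D :=
  ObjectProperty.ι _

/-- A category is extremally co-well-powered if every object has, up to
isomorphism, only a (small) set of extremal epimorphisms out of it. -/
def ECWP (C : Type u₂) [Category.{v₂} C] : Prop :=
  ∀ X : C, ∃ (ι : Type v₂) (Y : ι → C) (e : ∀ i, X ⟶ Y i),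
    (∀ i, ExtremalEpi (e i)) ∧
    ∀ ⦃Z : C⦄ (f : X ⟶ Z), ExtremalEpi f → ∃ (i : ι) (φ : Y i ≅ Z), e i ≫ φ.hom = f

/-- The category `(P, D)` associated to a projective filtration: objects are the
elements of `P`, morphisms `δ₁ → δ₂` are morphisms `g` of `D` with `g ∘ δ₁ = δ₂`. -/
def FiltCat {X : D} (P : ProjFilt X) : Type (max u v) := {δ : MorFrom X // δ ∈ P.carrier}

instance {X : D} (P : ProjFilt X) : Category.{v} (FiltCat P) where
  Hom δ₁ δ₂ := {g : δ₁.1.1 ⟶ δ₂.1.1 // δ₁.1.2 ≫ g = δ₂.1.2}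
  id δ := ⟨𝟙 _, Category.comp_id _⟩
  comp f g := ⟨f.1 ≫ g.1, by rw [← Category.assoc, f.2, g.2]⟩
  id_comp f := Subtype.ext (Category.id_comp _)
  comp_id f := Subtype.ext (Category.comp_id _)
  assoc f g h := Subtype.ext (Category.assoc _ _ _)

/-- The functor `(P, D) → D` sending an element of the filtration to its target. -/
def FiltDiagram {X : D} (P : ProjFilt X) : FiltCat P ⥤ D where
  obj δ := δ.1.1
  map g := g.1

/-- The canonical cone on the diagram of a projective filtration, with apex the
underlying object. -/
def filtCone {X : D} (P : ProjFilt X) : Limits.Cone (FiltDiagram P) where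
  pt := X
  π :=
    { app := fun δ => δ.1.2
      naturality := fun δ₁ δ₂ g => by
        have := g.2
        dsimp [FiltDiagram] at *
        simp [this] }

/-- A reduced projective filtration is an iso-filtration if the canonical cone
on its diagram is a limit cone, i.e. the limit exists and the canonical morphism
from the underlying object to it is an isomorphism. -/
def IsoFilt {X : D} (P : ProjFilt X) : Prop :=
  Nonempty (Limits.IsLimit (filtCone P))

/-- The category of iso-filtered objects of `D`. -/
def KObj (D : Type u) [Category.{v} D] :=
  ObjectProperty.FullSubcategory (fun A : QObj D => IsoFilt A.obj.filt)

instance : Category.{v} (KObj D) := ObjectProperty.FullSubcategory.category _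

/-- The inclusion functor `KD → QD`. -/
def kqInclusion (D : Type u) [Category.{v} D] : KObj D ⥤ QObj D :=
  ObjectProperty.ι _

/-- The forgetful functor `KD → D`. -/
def Kforget (D : Type u) [Category.{v} D] : KObj D ⥤ D :=
  kqInclusion D ⋙ qpInclusion D ⋙ Pforget D

/-- The smallest projective filtration containing a class of morphisms
(as a class). -/
def genSet {X : D} (S : Set (MorFrom X)) : Set (MorFrom X) :=
  {δ | ∀ P : ProjFilt X, S ⊆ P.carrier → δ ∈ P.carrier}

/-- The reduction of a class of morphisms: the saturation of the class of
extremal epimorphism parts of (extremal epi, mono)-factorisations of its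
elements. -/
def redSet {X : D} (S : Set (MorFrom X)) : Set (MorFrom X) :=
  {δ | ∃ ε : MorFrom X, ExtremalEpi ε.2 ∧
    (∃ δ' ∈ S, ∃ m : ε.1 ⟶ δ'.1, Mono m ∧ ε.2 ≫ m = δ'.2) ∧ Dom ε δ}

/-- The push forward of a filtration class along `f` (single morphism case). -/
def pushSet {X Y : D} (f : X ⟶ Y) (S : Set (MorFrom X)) : Set (MorFrom Y) :=
  {g | (⟨g.1, f ≫ g.2⟩ : MorFrom X) ∈ S}

/-- The discrete filtration on an object, as an iso-filtered object. -/
def kDiscreteObj (X : D) : KObj D where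
  obj :=
    { obj := (Pdiscrete D).obj X
      property := fun δ _ => ⟨⟨X, 𝟙 X⟩, trivial,
        ⟨(inferInstance : Epi (𝟙 X)), fun _ g m hm hgm => by
          haveI : IsSplitEpi m := ⟨⟨⟨g, hgm⟩⟩⟩
          exact isIso_of_mono_of_isSplitEpi m⟩,
        ⟨δ.2, Category.id_comp _⟩⟩ }
  property := ⟨{
    lift := fun c => c.π.app ⟨⟨X, 𝟙 X⟩, trivial⟩
    fac := fun c j => by
      have h := c.π.naturality (X := ⟨⟨X, 𝟙 X⟩, trivial⟩) (Y := j)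
        ⟨j.1.2, Category.id_comp _⟩
      dsimp [FiltDiagram, filtCone] at h ⊢
      exact h.symm.trans (Category.id_comp _)
    uniq := fun c m hm => by
      have h := hm ⟨⟨X, 𝟙 X⟩, trivial⟩
      rw [← Category.comp_id m]
      exact h }⟩

/-- The discrete filtration functor `D → KD`. -/
def kDiscrete (D : Type u) [Category.{v} D] : D ⥤ KObj D where
  obj X := kDiscreteObj X
  map f := ⟨f, fun _ _ => trivial⟩
  map_id _ := rfl
  map_comp _ _ := rfl

/-- The morphism in `KD` from an iso-filtered object to the discrete object on
the target of an element of its filtration. -/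
def kToDiscrete {A : KObj D} (δ : MorFrom A.obj.obj.base)
    (hδ : δ ∈ A.obj.obj.filt.carrier) : A ⟶ kDiscreteObj δ.1 :=
  ⟨⟨show PHom A.obj.obj ((kDiscreteObj δ.1).obj.obj) from
    ⟨δ.2, fun γ _ => A.obj.obj.filt.saturated' δ hδ _ ⟨γ.2, rfl⟩⟩⟩⟩

/-- The natural transformation `P(G) → P(H)` induced by `ν : G → H`. -/
def Pnat {E : Type u₂} [Category.{v₂} E] {G H : D ⥤ E} (ν : G ⟶ H) :
    Pfunctor G ⟶ Pfunctor H where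
  app A :=
    ⟨ν.app A.base, by
      rintro δ' ⟨δ, hδ, g, hg⟩
      exact ⟨δ, hδ, ⟨ν.app δ.1 ≫ g, by
        rw [← Category.assoc, ν.naturality, Category.assoc, hg] <;> rfl⟩⟩⟩
  naturality {A B} f := PHom.ext' (ν.naturality (PHom.toHom f))

attribute [reducible] MorFrom

/-! ## Machinery for Statement 15 -/

section Util

-- Dom basics
theorem Dom.rfl {X : D} (δ : MorFrom X) : Dom δ δ := ⟨𝟙 _, Category.comp_id _⟩

theorem Dom.trans {X : D} {a b c : MorFrom X} : Dom a b → Dom b c → Dom a c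
  | ⟨h₁, e₁⟩, ⟨h₂, e₂⟩ => ⟨h₁ ≫ h₂, by rw [← Category.assoc, e₁, e₂]⟩

theorem ProjFilt.mem_of_dom {X : D} (P : ProjFilt X) {δ₁ δ₂ : MorFrom X}
    (h : δ₁ ∈ P.carrier) (hd : Dom δ₁ δ₂) : δ₂ ∈ P.carrier :=
  P.saturated' δ₁ h δ₂ hd

theorem ProjFilt.mem_comp {X : D} (P : ProjFilt X) {T : D} {g : X ⟶ T}
    (h : (⟨T, g⟩ : MorFrom X) ∈ P.carrier) {U : D} (s : T ⟶ U) :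
    (⟨U, g ≫ s⟩ : MorFrom X) ∈ P.carrier :=
  P.mem_of_dom h ⟨s, rfl⟩

-- extremal epi basics
theorem extEpi_id {C : Type u₂} [Category.{v₂} C] (X : C) : ExtremalEpi (𝟙 X) := by
  refine ⟨inferInstance, fun Z g m hm hgm => ?_⟩
  haveI : IsSplitEpi m := ⟨⟨⟨g, hgm⟩⟩⟩
  exact isIso_of_mono_of_isSplitEpi m

theorem isIso_of_sect_of_epi {C : Type u₂} [Category.{v₂} C] {X Y : C} {f : X ⟶ Y} {r : Y ⟶ X}
    (hr : f ≫ r = 𝟙 X) (he : Epi f) : IsIso f := by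
  refine ⟨r, hr, ?_⟩
  have : f ≫ r ≫ f = f ≫ 𝟙 Y := by rw [← Category.assoc, hr]; simp
  exact he.left_cancellation _ _ this

theorem isIso_of_retr_of_mono {C : Type u₂} [Category.{v₂} C] {X Y : C} {f : X ⟶ Y} {s : Y ⟶ X}
    (hs : s ≫ f = 𝟙 Y) (hm : Mono f) : IsIso f := by
  refine ⟨s, ?_, hs⟩
  have : (f ≫ s) ≫ f = 𝟙 X ≫ f := by rw [Category.assoc, hs]; simp
  exact hm.right_cancellation _ _ this

theorem extEpi_comp {C : Type u₂} [Category.{v₂} C]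
    (hd : ∀ {A B Z X : C} (e : A ⟶ B) (m : Z ⟶ X) (g : A ⟶ Z) (h : B ⟶ X),
      ExtremalEpi e → Mono m → g ≫ m = e ≫ h → ∃ d : B ⟶ Z, e ≫ d = g ∧ d ≫ m = h)
    {A B C' : C} {e₁ : A ⟶ B} {e₂ : B ⟶ C'} (h₁ : ExtremalEpi e₁) (h₂ : ExtremalEpi e₂) :
    ExtremalEpi (e₁ ≫ e₂) := by
  haveI := h₁.1; haveI := h₂.1
  refine ⟨epi_comp _ _, fun Z g m hm hgm => ?_⟩
  obtain ⟨d, hd₁, hd₂⟩ := hd e₁ m g e₂ h₁ hm hgm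
  exact h₂.2 d m hm hd₂

theorem extEpi_comp_iso {C : Type u₂} [Category.{v₂} C] {A B C' : C} {e : A ⟶ B} {φ : B ⟶ C'}
    (h₁ : ExtremalEpi e) (h₂ : IsIso φ) : ExtremalEpi (e ≫ φ) := by
  haveI := h₁.1
  refine ⟨epi_comp _ _, fun Z g m hm hgm => ?_⟩
  have : g ≫ (m ≫ inv φ) = e := by rw [← Category.assoc, hgm]; simp
  have hmono : Mono (m ≫ inv φ) := mono_comp _ _
  have := h₁.2 g (m ≫ inv φ) hmono this
  have : IsIso ((m ≫ inv φ) ≫ φ) := by infer_instance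
  simpa using this

end Util

section KBasics

/-- base object of an iso-filtered object -/
abbrev KObj.b (A : KObj D) : D := A.obj.obj.base

/-- filtration of an iso-filtered object -/
abbrev KObj.filt (A : KObj D) : ProjFilt A.b := A.obj.obj.filt

theorem KObj.red (A : KObj D) : A.filt.Reduced := A.obj.property

noncomputable def KObj.lim (A : KObj D) : Limits.IsLimit (filtCone A.filt) :=
  A.property.some

/-- the underlying morphism of `D` of a morphism of `KObj D` -/
abbrev KHom.t {A B : KObj D} (f : A ⟶ B) : A.b ⟶ B.b := PHom.toHom f.hom.hom

theorem KHom.mem' {A B : KObj D} (f : A ⟶ B) {δ : MorFrom B.b} (h : δ ∈ B.filt.carrier) :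
    (⟨δ.1, KHom.t f ≫ δ.2⟩ : MorFrom A.b) ∈ A.filt.carrier := PHom.mem f.hom.hom δ h

theorem KHom.ext {A B : KObj D} {f g : A ⟶ B} (h : KHom.t f = KHom.t g) : f = g :=
  InducedCategory.hom_ext (InducedCategory.hom_ext (PHom.ext' h))

@[simp] theorem KHom.comp_t {A B C : KObj D} (f : A ⟶ B) (g : B ⟶ C) :
    KHom.t (f ≫ g) = KHom.t f ≫ KHom.t g := rfl

@[simp] theorem KHom.id_t (A : KObj D) : KHom.t (𝟙 A) = 𝟙 A.b := rfl

/-- wrap a morphism of projectively filtered objects -/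
def KHom.mk {A B : KObj D} (p : PHom A.obj.obj B.obj.obj) : A ⟶ B := ⟨⟨p⟩⟩

/-- morphisms out of a discrete object are arbitrary -/
def KHom.ofDisc {T : D} {B : KObj D} (g : T ⟶ B.b) : kDiscreteObj T ⟶ B :=
  KHom.mk <| ⟨g, fun _ _ => trivial⟩

@[simp] theorem KHom.ofDisc_t {T : D} {B : KObj D} (g : T ⟶ B.b) : KHom.t (KHom.ofDisc g) = g := rfl

/-- morphisms into a discrete object come from filtration elements -/
def KHom.toDisc {A : KObj D} {T : D} (g : A.b ⟶ T)
    (hg : (⟨T, g⟩ : MorFrom A.b) ∈ A.filt.carrier) : A ⟶ kDiscreteObj T :=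
  KHom.mk <| ⟨g, fun γ _ => A.filt.mem_comp hg γ.2⟩

@[simp] theorem KHom.toDisc_t {A : KObj D} {T : D} (g : A.b ⟶ T) (hg) :
    KHom.t (KHom.toDisc g hg) = g := rfl

/-- joint monomorphy of the limit cone of an iso-filtered object -/
theorem KObj.hom_ext (B : KObj D) {C : D} {x y : C ⟶ B.b}
    (h : ∀ δ : MorFrom B.b, ∀ _ : δ ∈ B.filt.carrier, x ≫ δ.2 = y ≫ δ.2) : x = y := by
  apply B.lim.hom_ext
  intro δ
  exact h δ.1 δ.2

/-- a morphism of `KObj D` is a monomorphism iff its underlying morphism is -/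
theorem kmono_iff {A B : KObj D} (f : A ⟶ B) : Mono f ↔ Mono (KHom.t f) := by
  constructor
  · intro hf
    constructor
    intro C u v huv
    have : KHom.ofDisc (B := A) u ≫ f = KHom.ofDisc v ≫ f := KHom.ext huv
    have := hf.right_cancellation _ _ this
    exact congrArg KHom.t this
  · intro hf
    constructor
    intro C u v huv
    exact KHom.ext (hf.right_cancellation _ _ (congrArg KHom.t huv))

end KBasics
section FiltMachinery

variable [Limits.HasLimits D]

theorem ProjFilt.term_mem {X : D} (P : ProjFilt X) :
    (⟨⊤_ D, Limits.terminal.from X⟩ : MorFrom X) ∈ P.carrier := by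
  obtain ⟨δ, hδ⟩ := P.nonempty'
  exact P.mem_of_dom hδ ⟨Limits.terminal.from _, Limits.terminal.comp_from _⟩

theorem ProjFilt.pair_mem {X : D} (P : ProjFilt X) {T U : D} {g : X ⟶ T} {k : X ⟶ U}
    (hg : (⟨T, g⟩ : MorFrom X) ∈ P.carrier) (hk : (⟨U, k⟩ : MorFrom X) ∈ P.carrier) :
    (⟨T ⨯ U, Limits.prod.lift g k⟩ : MorFrom X) ∈ P.carrier := by
  obtain ⟨ζ, hζ, ⟨h₁, e₁⟩, ⟨h₂, e₂⟩⟩ := P.directed' _ hg _ hk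
  exact P.mem_of_dom hζ ⟨Limits.prod.lift h₁ h₂, by rw [Limits.prod.comp_lift, e₁, e₂]⟩

/-- closure of a class of morphisms under finite tuples -/
inductive pairCl {X : D} (S : Set (MorFrom X)) : MorFrom X → Prop
  | base {δ} (h : δ ∈ S) : pairCl S δ
  | term : pairCl S ⟨⊤_ D, Limits.terminal.from X⟩
  | pair {δ₁ δ₂} (h₁ : pairCl S δ₁) (h₂ : pairCl S δ₂) :
      pairCl S ⟨δ₁.1 ⨯ δ₂.1, Limits.prod.lift δ₁.2 δ₂.2⟩

theorem pairCl_mem {X : D} {S : Set (MorFrom X)} {P : ProjFilt X} (hS : S ⊆ P.carrier) :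
    ∀ {δ}, pairCl S δ → δ ∈ P.carrier := by
  intro δ h
  induction h with
  | base h => exact hS h
  | term => exact P.term_mem
  | pair h₁ h₂ ih₁ ih₂ => exact P.pair_mem ih₁ ih₂

/-- the reduced filtration generated by a class of morphisms -/
def mkFilt {X : D} (S : Set (MorFrom X)) : Set (MorFrom X) := redSet {δ | pairCl S δ}

theorem mem_mkFilt_of_pairCl (hEM : EMCat D) {X : D} {S : Set (MorFrom X)} {δ : MorFrom X}
    (h : pairCl S δ) : δ ∈ mkFilt S := by
  obtain ⟨Z, e, m, he, hm, hem⟩ := hEM.fact δ.2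
  exact ⟨⟨Z, e⟩, he, ⟨δ, h, m, hm, hem⟩, ⟨m, hem⟩⟩

theorem mem_mkFilt_of_mem (hEM : EMCat D) {X : D} {S : Set (MorFrom X)} {δ : MorFrom X}
    (h : δ ∈ S) : δ ∈ mkFilt S := mem_mkFilt_of_pairCl hEM (pairCl.base h)

theorem mkFilt_sat {X : D} {S : Set (MorFrom X)} {δ₁ δ₂ : MorFrom X}
    (h : δ₁ ∈ mkFilt S) (hd : Dom δ₁ δ₂) : δ₂ ∈ mkFilt S := by
  obtain ⟨ε, he, hw, hdom⟩ := h
  exact ⟨ε, he, hw, hdom.trans hd⟩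

/-- `mkFilt S` is a projective filtration. -/
def mkFiltFilt (hEM : EMCat D) {X : D} (S : Set (MorFrom X)) : ProjFilt X where
  carrier := mkFilt S
  nonempty' := ⟨_, mem_mkFilt_of_pairCl hEM pairCl.term⟩
  directed' := by
    rintro δ₁ ⟨ε₁, he₁, ⟨χ₁, hχ₁, m₁, hm₁, hem₁⟩, hd₁⟩ δ₂ ⟨ε₂, he₂, ⟨χ₂, hχ₂, m₂, hm₂, hem₂⟩, hd₂⟩
    obtain ⟨Z, a, b, ha, hb, hab⟩ := hEM.fact (Limits.prod.lift χ₁.2 χ₂.2)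
    have hχ : pairCl S ⟨χ₁.1 ⨯ χ₂.1, Limits.prod.lift χ₁.2 χ₂.2⟩ := pairCl.pair hχ₁ hχ₂
    have hmem : (⟨Z, a⟩ : MorFrom X) ∈ mkFilt S :=
      ⟨⟨Z, a⟩, ha, ⟨_, hχ, b, hb, hab⟩, Dom.rfl _⟩
    refine ⟨⟨Z, a⟩, hmem, ?_, ?_⟩
    · obtain ⟨d, hda, _⟩ := hEM.diag a m₁ ε₁.2 (b ≫ Limits.prod.fst) ha hm₁
        (by rw [hem₁, ← Category.assoc, hab, Limits.prod.lift_fst])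
      exact Dom.trans ⟨d, hda⟩ hd₁
    · obtain ⟨d, hda, _⟩ := hEM.diag a m₂ ε₂.2 (b ≫ Limits.prod.snd) ha hm₂
        (by rw [hem₂, ← Category.assoc, hab, Limits.prod.lift_snd])
      exact Dom.trans ⟨d, hda⟩ hd₂
  saturated' := fun δ₁ h δ₂ hd => mkFilt_sat h hd

theorem mkFiltFilt_reduced (hEM : EMCat D) {X : D} (S : Set (MorFrom X)) :
    (mkFiltFilt hEM S).Reduced := by
  rintro δ ⟨ε, he, hw, hdom⟩
  exact ⟨ε, ⟨ε, he, hw, Dom.rfl _⟩, he, hdom⟩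

/-- stability of membership under pulling back `mkFilt` along a morphism -/
theorem mkFilt_pull (hEM : EMCat D) {X C' : D} {S : Set (MorFrom X)} (φ : C' ⟶ X)
    (P' : ProjFilt C') (hred : P'.Reduced)
    (hS : ∀ γ ∈ S, (⟨γ.1, φ ≫ γ.2⟩ : MorFrom C') ∈ P'.carrier) :
    ∀ δ ∈ mkFilt S, (⟨δ.1, φ ≫ δ.2⟩ : MorFrom C') ∈ P'.carrier := by
  have hcl : ∀ {χ : MorFrom X}, pairCl S χ → (⟨χ.1, φ ≫ χ.2⟩ : MorFrom C') ∈ P'.carrier := by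
    intro χ h
    induction h with
    | base h => exact hS _ h
    | term =>
        have : φ ≫ Limits.terminal.from X = Limits.terminal.from C' := Limits.terminal.comp_from _
        rw [this]; exact P'.term_mem
    | pair h₁ h₂ ih₁ ih₂ =>
        rw [Limits.prod.comp_lift]; exact P'.pair_mem ih₁ ih₂
  rintro δ ⟨ε, he, ⟨χ, hχ, m₀, hm₀, hεm₀⟩, s, hs⟩
  have hφχ := hcl hχ
  obtain ⟨ε₀, hε₀P, hε₀e, k, hk⟩ := hred _ hφχ
  obtain ⟨d, hd, _⟩ := hEM.diag ε₀.2 m₀ (φ ≫ ε.2) k hε₀e hm₀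
    (by rw [Category.assoc, hεm₀, hk])
  have : (⟨ε.1, φ ≫ ε.2⟩ : MorFrom C') ∈ P'.carrier := P'.mem_of_dom hε₀P ⟨d, hd⟩
  have := P'.mem_comp this s
  rwa [Category.assoc, hs] at this

end FiltMachinery
section KLimits

variable [Limits.HasLimits D]

variable {J : Type u₂} [Category.{v₂} J]

/-- data of a limit in `D` of the underlying diagram of a diagram in `KD` -/
structure LimData (Gk : J ⥤ KObj D) where
  pt : D
  lam : ∀ j : J, pt ⟶ (Gk.obj j).b
  w : ∀ {j j' : J} (α : j ⟶ j'), lam j ≫ KHom.t (Gk.map α) = lam j'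
  lift : ∀ {C : D} (v : ∀ j, C ⟶ (Gk.obj j).b),
      (∀ {j j' : J} (α : j ⟶ j'), v j ≫ KHom.t (Gk.map α) = v j') → (C ⟶ pt)
  fac : ∀ {C : D} (v : ∀ j, C ⟶ (Gk.obj j).b) (hv) (j : J), lift v hv ≫ lam j = v j
  uniq : ∀ {C : D} (v : ∀ j, C ⟶ (Gk.obj j).b) (hv) (w' : C ⟶ pt),
      (∀ j, w' ≫ lam j = v j) → w' = lift v hv

theorem LimData.hom_ext {Gk : J ⥤ KObj D} (ld : LimData Gk) {C : D} {w₁ w₂ : C ⟶ ld.pt}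
    (h : ∀ j, w₁ ≫ ld.lam j = w₂ ≫ ld.lam j) : w₁ = w₂ := by
  have hv : ∀ {j j' : J} (α : j ⟶ j'), (w₁ ≫ ld.lam j) ≫ KHom.t (Gk.map α) = w₁ ≫ ld.lam j' := by
    intro j j' α; rw [Category.assoc, ld.w]
  rw [ld.uniq _ hv w₁ (fun j => rfl), ld.uniq _ hv w₂ (fun j => (h j).symm)]

variable {Gk : J ⥤ KObj D} (ld : LimData Gk) (hEM : EMCat D)

/-- generators of the filtration on a limit -/
def klimGens : Set (MorFrom ld.pt) :=
  {γ | ∃ j, ∃ ξ ∈ (Gk.obj j).filt.carrier, γ = ⟨ξ.1, ld.lam j ≫ ξ.2⟩}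

/-- the filtration on the limit -/
def klimFilt : ProjFilt ld.pt := mkFiltFilt hEM (klimGens ld)

theorem klim_gen_mem {j : J} {ξ : MorFrom (Gk.obj j).b} (hξ : ξ ∈ (Gk.obj j).filt.carrier) :
    (⟨ξ.1, ld.lam j ≫ ξ.2⟩ : MorFrom ld.pt) ∈ (klimFilt ld hEM).carrier :=
  mem_mkFilt_of_mem hEM ⟨j, ξ, hξ, rfl⟩

theorem cone_app_congr {X T : D} {P : ProjFilt X} (c : Limits.Cone (FiltDiagram P))
    {f g : X ⟶ T} (h : f = g) (hf : (⟨T, f⟩ : MorFrom X) ∈ P.carrier)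
    (hg : (⟨T, g⟩ : MorFrom X) ∈ P.carrier) :
    c.π.app ⟨⟨T, f⟩, hf⟩ = c.π.app ⟨⟨T, g⟩, hg⟩ := by subst h; rfl

section IsoFilt

variable {c : Limits.Cone (FiltDiagram (klimFilt ld hEM))}

/-- restriction of a cone on the limit filtration to one of the corners -/
@[simps] noncomputable def restrCone (c : Limits.Cone (FiltDiagram (klimFilt ld hEM))) (j : J) :
    Limits.Cone (FiltDiagram (Gk.obj j).filt) where
  pt := c.pt
  π :=
    { app := fun ξ => c.π.app ⟨⟨ξ.1.1, ld.lam j ≫ ξ.1.2⟩, klim_gen_mem ld hEM ξ.2⟩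
      naturality := by
        intro ξ ξ' g
        have := c.w (j := ⟨⟨ξ.1.1, ld.lam j ≫ ξ.1.2⟩, klim_gen_mem ld hEM ξ.2⟩)
          (j' := ⟨⟨ξ'.1.1, ld.lam j ≫ ξ'.1.2⟩, klim_gen_mem ld hEM ξ'.2⟩)
          ⟨g.1, by rw [Category.assoc, g.2]⟩
        simpa [FiltDiagram] using this.symm }

/-- the factorisation of a cone through the limit, componentwise -/
noncomputable def klimV (c : Limits.Cone (FiltDiagram (klimFilt ld hEM))) (j : J) :
    c.pt ⟶ (Gk.obj j).b :=
  (Gk.obj j).lim.lift (restrCone ld hEM c j)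

theorem klimV_fac (j : J) (ξ : MorFrom (Gk.obj j).b) (hξ : ξ ∈ (Gk.obj j).filt.carrier) :
    klimV ld hEM c j ≫ ξ.2 = c.π.app ⟨⟨ξ.1, ld.lam j ≫ ξ.2⟩, klim_gen_mem ld hEM hξ⟩ :=
  (Gk.obj j).lim.fac (restrCone ld hEM c j) ⟨ξ, hξ⟩

theorem klimV_w {j j' : J} (α : j ⟶ j') :
    klimV ld hEM c j ≫ KHom.t (Gk.map α) = klimV ld hEM c j' := by
  apply (Gk.obj j').hom_ext
  intro ξ' hξ'
  have hpull := KHom.mem' (Gk.map α) hξ'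
  have h1 : klimV ld hEM c j ≫ KHom.t (Gk.map α) ≫ ξ'.2 =
      c.π.app ⟨⟨ξ'.1, ld.lam j ≫ KHom.t (Gk.map α) ≫ ξ'.2⟩, klim_gen_mem ld hEM hpull⟩ := by
    have := klimV_fac ld hEM (c := c) j _ hpull
    simpa using this
  rw [Category.assoc, h1, klimV_fac ld hEM (c := c) j' ξ' hξ']
  exact cone_app_congr c (by rw [← Category.assoc, ld.w]) _ _

/-- the induced morphism to the limit -/
noncomputable def klimW (c : Limits.Cone (FiltDiagram (klimFilt ld hEM))) : c.pt ⟶ ld.pt :=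
  ld.lift (klimV ld hEM c) (fun α => klimV_w ld hEM α)

theorem klimW_gens {γ : MorFrom ld.pt} (h : γ ∈ klimGens ld) (h' : γ ∈ (klimFilt ld hEM).carrier) :
    klimW ld hEM c ≫ γ.2 = c.π.app ⟨γ, h'⟩ := by
  obtain ⟨j, ξ, hξ, rfl⟩ := h
  rw [← Category.assoc, klimW, ld.fac, klimV_fac ld hEM j ξ hξ]

theorem klimW_pairCl {χ : MorFrom ld.pt} (h : pairCl (klimGens ld) χ)
    (h' : χ ∈ (klimFilt ld hEM).carrier) :
    klimW ld hEM c ≫ χ.2 = c.π.app ⟨χ, h'⟩ := by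
  induction h with
  | base h => exact klimW_gens ld hEM h h'
  | term =>
      have h₁ : klimW ld hEM c ≫ Limits.terminal.from ld.pt = Limits.terminal.from c.pt :=
        Limits.terminal.comp_from _
      have h₂ : c.π.app ⟨⟨⊤_ D, Limits.terminal.from ld.pt⟩, h'⟩ = Limits.terminal.from c.pt :=
        Limits.terminal.hom_ext _ _
      rw [h₁, h₂]
  | pair h₁ h₂ ih₁ ih₂ =>
      rename_i χ₁ χ₂
      have m₁ : χ₁ ∈ (klimFilt ld hEM).carrier := mem_mkFilt_of_pairCl hEM h₁
      have m₂ : χ₂ ∈ (klimFilt ld hEM).carrier := mem_mkFilt_of_pairCl hEM h₂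
      apply Limits.prod.hom_ext
      · have := c.w (j := ⟨_, h'⟩) (j' := ⟨χ₁, m₁⟩) ⟨Limits.prod.fst, Limits.prod.lift_fst _ _⟩
        rw [Category.assoc, Limits.prod.lift_fst, ih₁ m₁]
        exact (this.symm.trans rfl)
      · have := c.w (j := ⟨_, h'⟩) (j' := ⟨χ₂, m₂⟩) ⟨Limits.prod.snd, Limits.prod.lift_snd _ _⟩
        rw [Category.assoc, Limits.prod.lift_snd, ih₂ m₂]
        exact (this.symm.trans rfl)

theorem klimW_all {δ : MorFrom ld.pt} (h : δ ∈ (klimFilt ld hEM).carrier) :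
    klimW ld hEM c ≫ δ.2 = c.π.app ⟨δ, h⟩ := by
  obtain ⟨ε, hεe, hw, s, hs⟩ := h
  obtain ⟨χ, hχ, m₀, hm₀, hεm₀⟩ := hw
  have hεmem : ε ∈ (klimFilt ld hEM).carrier := ⟨ε, hεe, ⟨χ, hχ, m₀, hm₀, hεm₀⟩, Dom.rfl _⟩
  have hχmem : χ ∈ (klimFilt ld hEM).carrier := mem_mkFilt_of_pairCl hEM hχ
  have hε : klimW ld hEM c ≫ ε.2 = c.π.app ⟨ε, hεmem⟩ := by
    apply hm₀.right_cancellation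
    have h₁ : klimW ld hEM c ≫ ε.2 ≫ m₀ = c.π.app ⟨χ, hχmem⟩ := by
      rw [hεm₀]; exact klimW_pairCl ld hEM hχ hχmem
    have h₂ := c.w (j := ⟨ε, hεmem⟩) (j' := ⟨χ, hχmem⟩) ⟨m₀, hεm₀⟩
    rw [Category.assoc, h₁]
    exact h₂.symm.trans rfl
  have h₂ := c.w (j := ⟨ε, hεmem⟩) (j' := ⟨δ, ⟨ε, hεe, ⟨χ, hχ, m₀, hm₀, hεm₀⟩, s, hs⟩⟩) ⟨s, hs⟩
  refine Eq.trans (calc klimW ld hEM c ≫ δ.2 = klimW ld hEM c ≫ ε.2 ≫ s := by rw [hs]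
    _ = c.π.app ⟨ε, hεmem⟩ ≫ s := by rw [← Category.assoc, hε]; rfl) ?_
  exact h₂.trans rfl

/-- the filtration on the limit is an iso-filtration -/
noncomputable def klimIsLim : Limits.IsLimit (filtCone (klimFilt ld hEM)) where
  lift c := klimW ld hEM c
  fac c δ := klimW_all ld hEM δ.2
  uniq c w' hw' := by
    apply ld.uniq
    intro j
    apply (Gk.obj j).hom_ext
    intro ξ hξ
    have hq := hw' ⟨⟨ξ.1, ld.lam j ≫ ξ.2⟩, klim_gen_mem ld hEM hξ⟩
    erw [Category.assoc, klimV_fac ld hEM j ξ hξ, ← hq]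
    rfl

end IsoFilt

/-- the limit as an iso-filtered object -/
noncomputable def KLObj : KObj D :=
  ⟨⟨⟨ld.pt, klimFilt ld hEM⟩, mkFiltFilt_reduced hEM _⟩, ⟨klimIsLim ld hEM⟩⟩

/-- the projections of the limit -/
noncomputable def KLproj (j : J) : KLObj ld hEM ⟶ Gk.obj j :=
  KHom.mk <| ⟨ld.lam j, fun ξ hξ => klim_gen_mem ld hEM hξ⟩

@[simp] theorem KLproj_t (j : J) : KHom.t (KLproj ld hEM j) = ld.lam j := rfl

theorem KLproj_w {j j' : J} (α : j ⟶ j') :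
    KLproj ld hEM j ≫ Gk.map α = KLproj ld hEM j' := KHom.ext (ld.w α)

/-- the underlying morphism of the lifting of a cone in `KD` -/
noncomputable def klLiftT {C : KObj D} (v : ∀ j, C ⟶ Gk.obj j)
    (hv : ∀ {j j' : J} (α : j ⟶ j'), v j ≫ Gk.map α = v j') : C.b ⟶ ld.pt :=
  ld.lift (fun j => KHom.t (v j)) (fun α => by
    have := congrArg KHom.t (hv α); simpa using this)

theorem klLiftT_fac {C : KObj D} (v : ∀ j, C ⟶ Gk.obj j)
    (hv : ∀ {j j' : J} (α : j ⟶ j'), v j ≫ Gk.map α = v j') (j : J) :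
    klLiftT ld v hv ≫ ld.lam j = KHom.t (v j) := ld.fac _ _ j

/-- lifting cones in `KD` through the limit -/
noncomputable def KLlift {C : KObj D} (v : ∀ j, C ⟶ Gk.obj j)
    (hv : ∀ {j j' : J} (α : j ⟶ j'), v j ≫ Gk.map α = v j') : C ⟶ KLObj ld hEM :=
  KHom.mk <|
    ⟨klLiftT ld v hv, by
      intro δ hδ
      refine mkFilt_pull hEM _ C.filt C.red ?_ δ hδ
      rintro γ ⟨j, ξ, hξ, rfl⟩
      have h1 := KHom.mem' (v j) hξ
      have h2 : klLiftT ld v hv ≫ ld.lam j ≫ ξ.2 = KHom.t (v j) ≫ ξ.2 := by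
        rw [← Category.assoc, klLiftT_fac]
      show (⟨ξ.1, klLiftT ld v hv ≫ ld.lam j ≫ ξ.2⟩ : MorFrom C.b) ∈ C.filt.carrier
      rw [h2]
      exact h1⟩

theorem KLlift_fac {C : KObj D} (v : ∀ j, C ⟶ Gk.obj j)
    (hv : ∀ {j j' : J} (α : j ⟶ j'), v j ≫ Gk.map α = v j') (j : J) :
    KLlift ld hEM v hv ≫ KLproj ld hEM j = v j :=
  KHom.ext (ld.fac _ _ j)

theorem KL_hom_ext {C : KObj D} {x y : C ⟶ KLObj ld hEM}
    (h : ∀ j, x ≫ KLproj ld hEM j = y ≫ KLproj ld hEM j) : x = y :=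
  KHom.ext (ld.hom_ext (fun j => congrArg KHom.t (h j)))

end KLimits
section Reflection

variable [Limits.HasLimits D] (hEM : EMCat D)

/-- the discrete diagram of a projective filtration, in `KD` -/
noncomputable def discDiag {X : D} (P : ProjFilt X) : FiltCat P ⥤ KObj D where
  obj δ := kDiscreteObj δ.1.1
  map {δ δ'} g := KHom.ofDisc (B := kDiscreteObj δ'.1.1) g.1
  map_id δ := KHom.ext rfl
  map_comp f g := KHom.ext rfl

variable {X : D} (P : ProjFilt X) (hred : P.Reduced)
  {ι : Type v} (Y : ι → D) (ee : ∀ i, X ⟶ Y i)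
  (hext : ∀ i, ExtremalEpi (ee i))
  (hcov : ∀ ⦃Z : D⦄ (f : X ⟶ Z), ExtremalEpi f → ∃ (i : ι) (φ : Y i ≅ Z), ee i ≫ φ.hom = f)

/-- the small index category of extremal epimorphisms in a reduced filtration -/
def SmCat : Type v := {i : ι // (⟨Y i, ee i⟩ : MorFrom X) ∈ P.carrier}

instance : Category.{v} (SmCat P Y ee) where
  Hom i j := {s : Y i.1 ⟶ Y j.1 // ee i.1 ≫ s = ee j.1}
  id i := ⟨𝟙 _, Category.comp_id _⟩
  comp f g := ⟨f.1 ≫ g.1, by rw [← Category.assoc, f.2, g.2]⟩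
  id_comp f := Subtype.ext (Category.id_comp _)
  comp_id f := Subtype.ext (Category.comp_id _)
  assoc f g h := Subtype.ext (Category.assoc _ _ _)

/-- the small diagram of extremal quotients -/
def smDiag : SmCat P Y ee ⥤ D where
  obj i := Y i.1
  map s := s.1

include hred hext hcov

theorem sm_cover {δ : MorFrom X} (hδ : δ ∈ P.carrier) :
    ∃ (i : SmCat P Y ee) (s : Y i.1 ⟶ δ.1), ee i.1 ≫ s = δ.2 := by
  obtain ⟨ε, hε, hεe, k, hk⟩ := hred δ hδ
  obtain ⟨i, φ, hφ⟩ := hcov ε.2 hεe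
  have hmem : (⟨Y i, ee i⟩ : MorFrom X) ∈ P.carrier :=
    P.mem_of_dom hε ⟨φ.inv, by rw [← hφ]; simp⟩
  exact ⟨⟨i, hmem⟩, φ.hom ≫ k, by rw [← Category.assoc, hφ, hk]⟩

/-- the limit of the small diagram -/
noncomputable def smL : D := Limits.limit (smDiag P Y ee)

theorem sm_wd {i j : SmCat P Y ee} {T : D} (s : Y i.1 ⟶ T) (s' : Y j.1 ⟶ T)
    (h : ee i.1 ≫ s = ee j.1 ≫ s') :
    Limits.limit.π (smDiag P Y ee) i ≫ s = Limits.limit.π (smDiag P Y ee) j ≫ s' := by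
  obtain ⟨ζ, hζ, ⟨a, ha⟩, ⟨b, hb⟩⟩ := P.directed' _ i.2 _ j.2
  obtain ⟨k, u, hu⟩ := sm_cover P hred Y ee hext hcov hζ
  have mi : Limits.limit.π (smDiag P Y ee) k ≫ (u ≫ a) = Limits.limit.π (smDiag P Y ee) i :=
    Limits.limit.w (smDiag P Y ee) (⟨u ≫ a, by rw [← Category.assoc, hu, ha]⟩ : k ⟶ i)
  have mj : Limits.limit.π (smDiag P Y ee) k ≫ (u ≫ b) = Limits.limit.π (smDiag P Y ee) j :=
    Limits.limit.w (smDiag P Y ee) (⟨u ≫ b, by rw [← Category.assoc, hu, hb]⟩ : k ⟶ j)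
  have hepi : Epi (ee k.1) := (hext k.1).1
  have key : (u ≫ a) ≫ s = (u ≫ b) ≫ s' := by
    apply hepi.left_cancellation
    rw [← Category.assoc, ← Category.assoc, ← Category.assoc, ← Category.assoc, hu, ha, hb]
    exact h
  rw [← mi, ← mj]
  simp only [Category.assoc] at key ⊢
  exact ((Category.assoc _ _ _).trans (whisker_eq _ ((Category.assoc _ _ _).trans key))).trans ((Category.assoc _ _ _).trans (whisker_eq _ (Category.assoc _ _ _))).symm

/-- the component of the extended cone at an arbitrary element of the filtration -/
noncomputable def sapp (δ : MorFrom X) (hδ : δ ∈ P.carrier) : smL P Y ee ⟶ δ.1 :=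
  Limits.limit.π (smDiag P Y ee) (sm_cover P hred Y ee hext hcov hδ).choose ≫
    (sm_cover P hred Y ee hext hcov hδ).choose_spec.choose

theorem sapp_spec (δ : MorFrom X) (hδ : δ ∈ P.carrier) :
    ∃ (i : SmCat P Y ee) (s : Y i.1 ⟶ δ.1),
      ee i.1 ≫ s = δ.2 ∧ sapp P hred Y ee hext hcov δ hδ = Limits.limit.π (smDiag P Y ee) i ≫ s :=
  ⟨_, _, (sm_cover P hred Y ee hext hcov hδ).choose_spec.choose_spec, rfl⟩

theorem sapp_congr {δ δ' : MorFrom X} (hδ : δ ∈ P.carrier) (hδ' : δ' ∈ P.carrier)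
    (g : δ.1 ⟶ δ'.1) (hg : δ.2 ≫ g = δ'.2) :
    sapp P hred Y ee hext hcov δ hδ ≫ g = sapp P hred Y ee hext hcov δ' hδ' := by
  obtain ⟨i, s, hs, he⟩ := sapp_spec P hred Y ee hext hcov δ hδ
  obtain ⟨j, s', hs', he'⟩ := sapp_spec P hred Y ee hext hcov δ' hδ'
  erw [he, he', Category.assoc]
  exact sm_wd P hred Y ee hext hcov _ _ (by erw [← Category.assoc, hs, hs', hg])

theorem sapp_sm (i : SmCat P Y ee) :
    sapp P hred Y ee hext hcov ⟨Y i.1, ee i.1⟩ i.2 = Limits.limit.π (smDiag P Y ee) i := by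
  obtain ⟨j, s, hs, he⟩ := sapp_spec P hred Y ee hext hcov ⟨Y i.1, ee i.1⟩ i.2
  have := sm_wd P hred Y ee hext hcov (i := j) (j := i) s (𝟙 _) (by rw [hs]; simp)
  rw [he, this]
  exact Category.comp_id _

/-- lifting cones through the small limit -/
noncomputable def smLift {C : D} (v : ∀ δ : FiltCat P, C ⟶ δ.1.1)
    (hv : ∀ {δ δ' : FiltCat P} (α : δ ⟶ δ'), v δ ≫ α.1 = v δ') : C ⟶ smL P Y ee :=
  Limits.limit.lift (smDiag P Y ee)
    { pt := C
      π :=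
        { app := fun i => v ⟨⟨Y i.1, ee i.1⟩, i.2⟩
          naturality := fun i j s => by
            have := hv (δ := ⟨⟨Y i.1, ee i.1⟩, i.2⟩) (δ' := ⟨⟨Y j.1, ee j.1⟩, j.2⟩) ⟨s.1, s.2⟩
            exact (Category.id_comp _).trans this.symm } }

theorem smLift_fac {C : D} (v : ∀ δ : FiltCat P, C ⟶ δ.1.1)
    (hv : ∀ {δ δ' : FiltCat P} (α : δ ⟶ δ'), v δ ≫ α.1 = v δ') (δ : FiltCat P) :
    smLift P Y ee v hv ≫ sapp P hred Y ee hext hcov δ.1 δ.2 = v δ := by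
  obtain ⟨i, s, hs, he⟩ := sapp_spec P hred Y ee hext hcov δ.1 δ.2
  erw [he, ← Category.assoc, smLift, Limits.limit.lift_π]
  exact hv (δ := ⟨⟨Y i.1, ee i.1⟩, i.2⟩) (δ' := δ) ⟨s, hs⟩

theorem sm_uniq {C : D} (v : ∀ δ : FiltCat P, C ⟶ δ.1.1)
    (hv : ∀ {δ δ' : FiltCat P} (α : δ ⟶ δ'), v δ ≫ α.1 = v δ') (w' : C ⟶ smL P Y ee)
    (hw' : ∀ δ : FiltCat P, w' ≫ sapp P hred Y ee hext hcov δ.1 δ.2 = v δ) :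
    w' = smLift P Y ee v hv := by
  apply Limits.limit.hom_ext
  intro i
  rw [smLift, Limits.limit.lift_π]
  have := hw' ⟨⟨Y i.1, ee i.1⟩, i.2⟩
  rw [← sapp_sm P hred Y ee hext hcov i]
  exact this

/-- limit data over the discrete diagram of a reduced filtration -/
noncomputable def reflLD : LimData (discDiag (D := D) P) where
  pt := smL P Y ee
  lam δ := sapp P hred Y ee hext hcov δ.1 δ.2
  w {δ δ'} α := sapp_congr P hred Y ee hext hcov δ.2 δ'.2 α.1 α.2
  lift {C} v hv := smLift P Y ee v (fun α => hv α)
  fac {C} v hv δ := smLift_fac P hred Y ee hext hcov v (fun α => hv α) δ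
  uniq {C} v hv w' hw' := sm_uniq P hred Y ee hext hcov v (fun α => hv α) w' hw'
end Reflection
section ReflectionUniv

variable [Limits.HasLimits D] (hEM : EMCat D) {X : D} (P : ProjFilt X) (hred : P.Reduced)

variable (ld : LimData (discDiag (D := D) P))

/-- the unit of the reflection -/
noncomputable def unitT : X ⟶ ld.pt :=
  ld.lift (fun δ => δ.1.2) (fun α => α.2)

theorem unitT_lam (δ : FiltCat P) : unitT P ld ≫ ld.lam δ = δ.1.2 := ld.fac _ _ δ

theorem lamw (a b : FiltCat P) (g : a.1.1 ⟶ b.1.1) (hg : a.1.2 ≫ g = b.1.2) :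
    ld.lam a ≫ g = ld.lam b := ld.w (j := a) (j' := b) ⟨g, hg⟩

theorem refl_lam_mem (δ : FiltCat P) :
    (⟨δ.1.1, ld.lam δ⟩ : MorFrom ld.pt) ∈ (klimFilt ld hEM).carrier :=
  mkFilt_sat (klim_gen_mem ld hEM (j := δ) (ξ := ⟨δ.1.1, 𝟙 δ.1.1⟩) trivial) ⟨𝟙 _, by exact (Category.comp_id _).trans (Category.comp_id _)⟩

include hred in
theorem unit_pull : ∀ γ ∈ (klimFilt ld hEM).carrier,
    (⟨γ.1, unitT P ld ≫ γ.2⟩ : MorFrom X) ∈ P.carrier := by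
  refine mkFilt_pull hEM _ P hred ?_
  rintro γ ⟨δ, ξ, hξ, rfl⟩
  show (⟨ξ.1, unitT P ld ≫ ld.lam δ ≫ ξ.2⟩ : MorFrom X) ∈ P.carrier
  rw [← Category.assoc, unitT_lam]
  exact P.mem_comp δ.2 ξ.2

/-- reconstruction of tuple morphisms from their unit composites -/
theorem reflR {χ : MorFrom ld.pt} (hχ : pairCl (klimGens ld) χ) :
    ((⟨χ.1, unitT P ld ≫ χ.2⟩ : MorFrom X) ∈ P.carrier) ∧
      ∀ (ρ : FiltCat P) (k : ρ.1.1 ⟶ χ.1), ρ.1.2 ≫ k = unitT P ld ≫ χ.2 →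
        ld.lam ρ ≫ k = χ.2 := by
  induction hχ with
  | @base γ h =>
      obtain ⟨δ, ξ, hξ, rfl⟩ := h
      have hmem : (⟨ξ.1, δ.1.2 ≫ ξ.2⟩ : MorFrom X) ∈ P.carrier := P.mem_comp δ.2 ξ.2
      constructor
      · show (⟨ξ.1, unitT P ld ≫ ld.lam δ ≫ ξ.2⟩ : MorFrom X) ∈ P.carrier
        rw [← Category.assoc, unitT_lam]
        exact hmem
      · intro ρ k hk
        have hk' : ρ.1.2 ≫ k = δ.1.2 ≫ ξ.2 := by
          rw [hk, ← Category.assoc, unitT_lam]; rfl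
        have h1 : ld.lam ρ ≫ k = ld.lam ⟨⟨ξ.1, δ.1.2 ≫ ξ.2⟩, hmem⟩ :=
          ld.w (⟨k, hk'⟩ : ρ ⟶ ⟨⟨ξ.1, δ.1.2 ≫ ξ.2⟩, hmem⟩)
        have h2 : ld.lam δ ≫ ξ.2 = ld.lam ⟨⟨ξ.1, δ.1.2 ≫ ξ.2⟩, hmem⟩ :=
          ld.w (⟨ξ.2, rfl⟩ : δ ⟶ ⟨⟨ξ.1, δ.1.2 ≫ ξ.2⟩, hmem⟩)
        rw [h1, ← h2]
  | term =>
      constructor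
      · show (⟨⊤_ D, unitT P ld ≫ Limits.terminal.from ld.pt⟩ : MorFrom X) ∈ P.carrier
        rw [Limits.terminal.comp_from]
        exact P.term_mem
      · intro ρ k hk
        exact Limits.terminal.hom_ext _ _
  | @pair χ₁ χ₂ h₁ h₂ ih₁ ih₂ =>
      constructor
      · show (⟨_, unitT P ld ≫ Limits.prod.lift χ₁.2 χ₂.2⟩ : MorFrom X) ∈ P.carrier
        rw [Limits.prod.comp_lift]
        exact P.pair_mem ih₁.1 ih₂.1
      · intro ρ k hk
        apply Limits.prod.hom_ext
        · erw [Category.assoc, Limits.prod.lift_fst]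
          refine ih₁.2 ρ (k ≫ Limits.prod.fst) ?_
          rw [← Category.assoc, hk, Category.assoc, Limits.prod.lift_fst]
        · erw [Category.assoc, Limits.prod.lift_snd]
          refine ih₂.2 ρ (k ≫ Limits.prod.snd) ?_
          rw [← Category.assoc, hk, Category.assoc, Limits.prod.lift_snd]

include hEM hred in
/-- composites of the unit with extremal epimorphisms of the limit filtration are epi -/
theorem refl_epi {ε : MorFrom ld.pt} (hεe : ExtremalEpi ε.2) {χ : MorFrom ld.pt}
    (hχ : pairCl (klimGens ld) χ) (m₀ : ε.1 ⟶ χ.1) (hm₀ : Mono m₀) (hc : ε.2 ≫ m₀ = χ.2) :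
    Epi (unitT P ld ≫ ε.2) := by
  constructor
  intro U' u v huv
  have hcond : (unitT P ld ≫ ε.2) ≫ u = (unitT P ld ≫ ε.2) ≫ v := huv
  set jm := Limits.equalizer.ι u v with hjm
  have hψ : Limits.equalizer.lift _ hcond ≫ jm = unitT P ld ≫ ε.2 := Limits.equalizer.lift_ι _ _
  set ψ := Limits.equalizer.lift _ hcond
  have hPχ : (⟨χ.1, unitT P ld ≫ χ.2⟩ : MorFrom X) ∈ P.carrier := (reflR P ld hχ).1
  obtain ⟨ε₀, hε₀P, hε₀e, k₀, hk₀⟩ := hred _ hPχ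
  obtain ⟨d₀, hd₀, hd₀'⟩ := hEM.diag ε₀.2 (jm ≫ m₀) ψ k₀ hε₀e (mono_comp _ _)
    (by rw [← Category.assoc, hψ, Category.assoc, hc, hk₀])
  have hR := (reflR P ld hχ).2 ⟨ε₀, hε₀P⟩ k₀ hk₀
  have hfac : (ld.lam ⟨ε₀, hε₀P⟩ ≫ d₀ ≫ jm) ≫ m₀ = ε.2 ≫ m₀ := by
    erw [hc, Category.assoc, Category.assoc, hd₀', hR]
  have hfac' : (ld.lam ⟨ε₀, hε₀P⟩ ≫ d₀) ≫ jm = ε.2 := by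
    have := hm₀.right_cancellation _ _ hfac
    erw [← this, Category.assoc]
  have hiso : IsIso jm := hεe.2 _ jm inferInstance hfac'
  have hcond' : jm ≫ u = jm ≫ v := Limits.equalizer.condition u v
  rw [← cancel_epi jm, hcond']

include hred in
/-- morphisms out of the reflection are determined by their unit composites -/
theorem refl_cancel {W : KObj D} {x y : KLObj ld hEM ⟶ W}
    (h : unitT P ld ≫ KHom.t x = unitT P ld ≫ KHom.t y) : x = y := by
  apply KHom.ext
  apply W.hom_ext
  intro π hπ
  have hx := KHom.mem' x hπ
  have hy := KHom.mem' y hπ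
  obtain ⟨ζ, hζ, hdx, hdy⟩ := (klimFilt ld hEM).directed' _ hx _ hy
  obtain ⟨ε, hεe, ⟨χ, hχ, m₀, hm₀, hεm₀⟩, hdζ⟩ := hζ
  obtain ⟨σ₁, hσ₁⟩ := Dom.trans hdζ hdx
  obtain ⟨σ₂, hσ₂⟩ := Dom.trans hdζ hdy
  have hepi := refl_epi hEM P hred ld hεe hχ m₀ hm₀ hεm₀
  have hc : (unitT P ld ≫ ε.2) ≫ σ₁ = (unitT P ld ≫ ε.2) ≫ σ₂ := by
    erw [Category.assoc, Category.assoc, hσ₁, hσ₂, ← Category.assoc, ← Category.assoc, h]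
  have := hepi.left_cancellation _ _ hc
  have hσ₁' : ε.2 ≫ σ₁ = KHom.t x ≫ π.2 := hσ₁
  have hσ₂' : ε.2 ≫ σ₂ = KHom.t y ≫ π.2 := hσ₂
  show KHom.t x ≫ π.2 = KHom.t y ≫ π.2
  rw [← hσ₁', ← hσ₂', this]

/-- extension of morphisms along the unit: underlying morphism -/
noncomputable def reflExtT {W : KObj D} (h : X ⟶ W.b)
    (hmor : ∀ π ∈ W.filt.carrier, (⟨π.1, h ≫ π.2⟩ : MorFrom X) ∈ P.carrier) :
    ld.pt ⟶ W.b :=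
  W.lim.lift
    { pt := ld.pt
      π :=
        { app := fun π => ld.lam ⟨⟨π.1.1, h ≫ π.1.2⟩, hmor π.1 π.2⟩
          naturality := fun π π' g => by
            have := lamw P ld ⟨⟨π.1.1, h ≫ π.1.2⟩, hmor π.1 π.2⟩
              ⟨⟨π'.1.1, h ≫ π'.1.2⟩, hmor π'.1 π'.2⟩ g.1 (by rw [Category.assoc, g.2])
            exact (Category.id_comp _).trans this.symm } }

theorem reflExtT_fac {W : KObj D} (h : X ⟶ W.b)
    (hmor : ∀ π ∈ W.filt.carrier, (⟨π.1, h ≫ π.2⟩ : MorFrom X) ∈ P.carrier)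
    (π : MorFrom W.b) (hπ : π ∈ W.filt.carrier) :
    reflExtT P ld h hmor ≫ π.2 = ld.lam ⟨⟨π.1, h ≫ π.2⟩, hmor π hπ⟩ :=
  W.lim.fac _ ⟨π, hπ⟩

/-- extension of morphisms along the unit -/
noncomputable def reflExt {W : KObj D} (h : X ⟶ W.b)
    (hmor : ∀ π ∈ W.filt.carrier, (⟨π.1, h ≫ π.2⟩ : MorFrom X) ∈ P.carrier) :
    KLObj ld hEM ⟶ W :=
  KHom.mk <|
    ⟨reflExtT P ld h hmor, by
      intro π hπ
      show (⟨π.1, reflExtT P ld h hmor ≫ π.2⟩ : MorFrom ld.pt) ∈ (klimFilt ld hEM).carrier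
      rw [reflExtT_fac P ld h hmor π hπ]
      exact refl_lam_mem hEM P ld ⟨⟨π.1, h ≫ π.2⟩, hmor π hπ⟩⟩

theorem reflExt_fac {W : KObj D} (h : X ⟶ W.b)
    (hmor : ∀ π ∈ W.filt.carrier, (⟨π.1, h ≫ π.2⟩ : MorFrom X) ∈ P.carrier)
    (π : MorFrom W.b) (hπ : π ∈ W.filt.carrier) :
    KHom.t (reflExt hEM P ld h hmor) ≫ π.2 = ld.lam ⟨⟨π.1, h ≫ π.2⟩, hmor π hπ⟩ :=
  reflExtT_fac P ld h hmor π hπ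

theorem reflExt_unit {W : KObj D} (h : X ⟶ W.b)
    (hmor : ∀ π ∈ W.filt.carrier, (⟨π.1, h ≫ π.2⟩ : MorFrom X) ∈ P.carrier) :
    unitT P ld ≫ KHom.t (reflExt hEM P ld h hmor) = h := by
  apply W.hom_ext
  intro π hπ
  erw [Category.assoc, reflExt_fac hEM P ld h hmor π hπ, unitT_lam]

end ReflectionUniv
section KColimits

variable [Limits.HasLimits D]

/-- a choice of limit data for each reduced filtration, from extremal co-well-poweredness -/
noncomputable def ldOf (hecwp : ECWP D) {X : D} (P : ProjFilt X) (hred : P.Reduced) :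
    LimData (discDiag (D := D) P) :=
  reflLD P hred (hecwp X).choose_spec.choose (hecwp X).choose_spec.choose_spec.choose
    (hecwp X).choose_spec.choose_spec.choose_spec.1
    (hecwp X).choose_spec.choose_spec.choose_spec.2

variable {J : Type u₂} [Category.{v₂} J] [Limits.HasColimitsOfShape J D] (Gc : J ⥤ KObj D)

/-- the underlying diagram in `D` of a diagram in `KD` -/
def baseDiag : J ⥤ D where
  obj j := (Gc.obj j).b
  map α := KHom.t (Gc.map α)
  map_id j := by show KHom.t (Gc.map (𝟙 j)) = _; rw [Gc.map_id]; rfl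
  map_comp f g := by show KHom.t (Gc.map (f ≫ g)) = _; rw [Gc.map_comp]; rfl

/-- the colimit of the underlying diagram -/
noncomputable def colimB : D := Limits.colimit (baseDiag Gc)

/-- the injections into the colimit of the underlying diagram -/
noncomputable def colimι (j : J) : (Gc.obj j).b ⟶ colimB Gc := Limits.colimit.ι (baseDiag Gc) j

theorem colimι_w {j j' : J} (α : j ⟶ j') :
    KHom.t (Gc.map α) ≫ colimι Gc j' = colimι Gc j :=
  Limits.colimit.w (baseDiag Gc) α

/-- the glued filtration on the colimit -/
def glueFilt : ProjFilt (colimB Gc) where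
  carrier := {γ | ∀ j, (⟨γ.1, colimι Gc j ≫ γ.2⟩ : MorFrom (Gc.obj j).b) ∈ (Gc.obj j).filt.carrier}
  nonempty' := ⟨⟨⊤_ D, Limits.terminal.from _⟩, fun j => by
    rw [Limits.terminal.comp_from]; exact (Gc.obj j).filt.term_mem⟩
  directed' := by
    intro γ₁ h₁ γ₂ h₂
    refine ⟨⟨γ₁.1 ⨯ γ₂.1, Limits.prod.lift γ₁.2 γ₂.2⟩, fun j => ?_,
      ⟨Limits.prod.fst, Limits.prod.lift_fst _ _⟩, ⟨Limits.prod.snd, Limits.prod.lift_snd _ _⟩⟩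
    rw [Limits.prod.comp_lift]
    exact (Gc.obj j).filt.pair_mem (h₁ j) (h₂ j)
  saturated' := by
    rintro γ₁ h γ₂ ⟨k, hk⟩
    intro j
    have := (Gc.obj j).filt.mem_comp (h j) k
    rw [Category.assoc, hk] at this
    exact this

theorem glue_red (hEM : EMCat D) : (glueFilt Gc).Reduced := by
  rintro γ hγ
  obtain ⟨Z, a, b, ha, hb, hab⟩ := hEM.fact γ.2
  refine ⟨⟨Z, a⟩, fun j => ?_, ha, ⟨b, hab⟩⟩
  obtain ⟨ε, hεP, hεe, k, hk⟩ := (Gc.obj j).red _ (hγ j)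
  obtain ⟨d, hd, _⟩ := hEM.diag ε.2 b (colimι Gc j ≫ a) k hεe hb
    (by rw [Category.assoc, hab]; exact hk.symm)
  exact (Gc.obj j).filt.mem_of_dom hεP ⟨d, hd⟩

variable (hEM : EMCat D) (hecwp : ECWP D)

/-- the colimit in `KD` -/
noncomputable def KColim : KObj D :=
  KLObj (ldOf hecwp (glueFilt Gc) (glue_red Gc hEM)) hEM

/-- the unit into the colimit -/
noncomputable def kcUnit : colimB Gc ⟶ (KColim Gc hEM hecwp).b :=
  unitT (glueFilt Gc) (ldOf hecwp (glueFilt Gc) (glue_red Gc hEM))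

theorem kcUnit_pull : ∀ γ ∈ (KColim Gc hEM hecwp).filt.carrier,
    (⟨γ.1, kcUnit Gc hEM hecwp ≫ γ.2⟩ : MorFrom (colimB Gc)) ∈ (glueFilt Gc).carrier :=
  unit_pull hEM (glueFilt Gc) (glue_red Gc hEM) _

/-- the structure morphisms into the colimit -/
noncomputable def KCleg (j : J) : Gc.obj j ⟶ KColim Gc hEM hecwp :=
  KHom.mk <|
    ⟨colimι Gc j ≫ kcUnit Gc hEM hecwp, by
      intro γ hγ
      have := kcUnit_pull Gc hEM hecwp γ hγ j
      show (⟨γ.1, (colimι Gc j ≫ kcUnit Gc hEM hecwp) ≫ γ.2⟩ : MorFrom (Gc.obj j).b) ∈ _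
      rw [Category.assoc]
      exact this⟩

@[simp] theorem KCleg_t (j : J) :
    KHom.t (KCleg Gc hEM hecwp j) = colimι Gc j ≫ kcUnit Gc hEM hecwp := rfl

theorem KCleg_w {j j' : J} (α : j ⟶ j') :
    Gc.map α ≫ KCleg Gc hEM hecwp j' = KCleg Gc hEM hecwp j := by
  apply KHom.ext
  show KHom.t (Gc.map α) ≫ colimι Gc j' ≫ kcUnit Gc hEM hecwp = _
  rw [← Category.assoc, colimι_w]
  rfl

section Desc

variable {W : KObj D} (w : ∀ j, Gc.obj j ⟶ W)
  (hw : ∀ {j j' : J} (α : j ⟶ j'), Gc.map α ≫ w j' = w j)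

/-- descending a cocone to the underlying colimit -/
noncomputable def kcDescB : colimB Gc ⟶ W.b :=
  Limits.colimit.desc (baseDiag Gc)
    { pt := W.b
      ι :=
        { app := fun j => KHom.t (w j)
          naturality := fun j j' α => by
            have := congrArg KHom.t (hw α)
            exact this.trans (Category.comp_id _).symm } }

theorem kcDescB_fac (j : J) : colimι Gc j ≫ kcDescB Gc w hw = KHom.t (w j) :=
  Limits.colimit.ι_desc _ _

theorem kcDescB_mem : ∀ π ∈ W.filt.carrier,
    (⟨π.1, kcDescB Gc w hw ≫ π.2⟩ : MorFrom (colimB Gc)) ∈ (glueFilt Gc).carrier := by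
  intro π hπ j
  have h1 := KHom.mem' (w j) hπ
  show (⟨π.1, colimι Gc j ≫ kcDescB Gc w hw ≫ π.2⟩ : MorFrom (Gc.obj j).b) ∈ _
  rw [← Category.assoc, kcDescB_fac]
  exact h1

/-- the induced morphism out of the colimit -/
noncomputable def KCdesc : KColim Gc hEM hecwp ⟶ W :=
  reflExt hEM (glueFilt Gc) (ldOf hecwp (glueFilt Gc) (glue_red Gc hEM))
    (kcDescB Gc w hw) (kcDescB_mem Gc w hw)

theorem KCdesc_fac (j : J) : KCleg Gc hEM hecwp j ≫ KCdesc Gc hEM hecwp w hw = w j := by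
  apply KHom.ext
  show (colimι Gc j ≫ kcUnit Gc hEM hecwp) ≫ KHom.t (KCdesc Gc hEM hecwp w hw) = KHom.t (w j)
  rw [Category.assoc]
  rw [show kcUnit Gc hEM hecwp ≫ KHom.t (KCdesc Gc hEM hecwp w hw) = kcDescB Gc w hw from
    reflExt_unit hEM _ _ _ _]
  exact kcDescB_fac Gc w hw j

end Desc

theorem KC_hom_ext {W : KObj D} {x y : KColim Gc hEM hecwp ⟶ W}
    (h : ∀ j, KCleg Gc hEM hecwp j ≫ x = KCleg Gc hEM hecwp j ≫ y) : x = y := by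
  apply refl_cancel hEM (glueFilt Gc) (glue_red Gc hEM)
  apply Limits.colimit.hom_ext
  intro j
  have := congrArg KHom.t (h j)
  simp only [KHom.comp_t, KCleg_t, Category.assoc] at this
  exact this

end KColimits
section KDiag

variable [Limits.HasLimits D] (hEM : EMCat D)

/-- shape of a cospan -/
inductive CObj : Type where | l | r | o

/-- morphisms of the cospan shape -/
inductive CHom : CObj → CObj → Type where
  | idl : CHom .l .l
  | idr : CHom .r .r
  | ido : CHom .o .o
  | lo : CHom .l .o
  | ro : CHom .r .o

instance : Category.{0, 0} CObj where
  Hom := CHom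
  id X := match X with | .l => .idl | .r => .idr | .o => .ido
  comp f g := match f, g with
    | .idl, g => g
    | .idr, g => g
    | .ido, g => g
    | .lo, .ido => .lo
    | .ro, .ido => .ro
  id_comp f := by cases f <;> rfl
  comp_id f := by cases f <;> rfl
  assoc f g h := by cases f <;> cases g <;> cases h <;> rfl

variable {B W Xo : KObj D} (h : B ⟶ Xo) (m : W ⟶ Xo)

/-- a cospan in `KD` -/
def cospanK : CObj ⥤ KObj D where
  obj X := match X with | .l => B | .r => W | .o => Xo
  map f := match f with | .idl => 𝟙 B | .idr => 𝟙 W | .ido => 𝟙 Xo | .lo => h | .ro => m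
  map_id X := by cases X <;> rfl
  map_comp f g := by change CHom _ _ at f; change CHom _ _ at g; cases f <;> cases g <;> simp <;> rfl

/-- limit data for a pullback in `KD` -/
noncomputable def pbLD : LimData (cospanK h m) where
  pt := Limits.pullback (KHom.t h) (KHom.t m)
  lam j := match j with
    | .l => Limits.pullback.fst _ _
    | .r => Limits.pullback.snd _ _
    | .o => Limits.pullback.fst _ _ ≫ KHom.t h
  w {j j'} α := by
    change CHom _ _ at α; cases α
    · exact Category.comp_id _
    · exact Category.comp_id _
    · exact Category.comp_id _
    · rfl
    · exact (Limits.pullback.condition).symm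
  lift {C} v hv := Limits.pullback.lift (v .l) (v .r)
    (by erw [show v CObj.l ≫ KHom.t h = v CObj.o from hv CHom.lo,
            show v CObj.r ≫ KHom.t m = v CObj.o from hv CHom.ro])
  fac {C} v hv j := by
    cases j
    · exact Limits.pullback.lift_fst _ _ _
    · exact Limits.pullback.lift_snd _ _ _
    · erw [← Category.assoc, Limits.pullback.lift_fst]
      exact hv CHom.lo
  uniq {C} v hv w' hw' := by
    apply Limits.pullback.hom_ext
    · erw [Limits.pullback.lift_fst]; exact hw' CObj.l
    · erw [Limits.pullback.lift_snd]; exact hw' CObj.r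

include hEM in
/-- the diagonal fill-in property in `KD` -/
theorem kdiag {A B W Xo : KObj D} (e : A ⟶ B) (m : W ⟶ Xo) (g : A ⟶ W) (h : B ⟶ Xo)
    (he : ExtremalEpi e) (hm : Mono m) (hsq : g ≫ m = e ≫ h) :
    ∃ d : B ⟶ W, e ≫ d = g ∧ d ≫ m = h := by
  haveI hmt : Mono (KHom.t m) := (kmono_iff m).1 hm
  let ld := pbLD h m
  let pl : KLObj ld hEM ⟶ B := KLproj ld hEM CObj.l
  let pr : KLObj ld hEM ⟶ W := KLproj ld hEM CObj.r
  let v : ∀ j : CObj, A ⟶ (cospanK h m).obj j :=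
    fun j => match j with | CObj.l => e | CObj.r => g | CObj.o => e ≫ h
  have hv : ∀ {j j' : CObj} (α : j ⟶ j'), v j ≫ (cospanK h m).map α = v j' := by
    intro j j' α
    change CHom _ _ at α; cases α
    · exact Category.comp_id _
    · exact Category.comp_id _
    · exact Category.comp_id _
    · rfl
    · exact hsq
  let lft : A ⟶ KLObj ld hEM := KLlift ld hEM v hv
  have hl : lft ≫ pl = e := KLlift_fac ld hEM v hv CObj.l
  have hr : lft ≫ pr = g := KLlift_fac ld hEM v hv CObj.r
  have hmono_pl : Mono pl := by
    apply (kmono_iff pl).2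
    show Mono (Limits.pullback.fst (KHom.t h) (KHom.t m))
    infer_instance
  have hiso : IsIso pl := he.2 lft pl hmono_pl hl
  have hcond : pr ≫ m = pl ≫ h := by
    apply KHom.ext
    exact (Limits.pullback.condition).symm
  refine ⟨inv pl ≫ pr, ?_, ?_⟩
  · rw [← hl, Category.assoc, ← Category.assoc pl, IsIso.hom_inv_id, Category.id_comp]
    exact hr
  · rw [Category.assoc, hcond, ← Category.assoc, IsIso.inv_hom_id, Category.id_comp]

end KDiag
section FactMachinery

variable [Limits.HasLimits D] (hEM : EMCat D)

/-- cancellation of epimorphisms of `KD` against filtration elements -/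
theorem kepi_cancel {A Bk : KObj D} (e : A ⟶ Bk) (hee : Epi e) {T : D} (x y : Bk.b ⟶ T)
    (hx : (⟨T, x⟩ : MorFrom Bk.b) ∈ Bk.filt.carrier)
    (hy : (⟨T, y⟩ : MorFrom Bk.b) ∈ Bk.filt.carrier)
    (hxy : KHom.t e ≫ x = KHom.t e ≫ y) : x = y := by
  have := hee.left_cancellation (KHom.toDisc x hx) (KHom.toDisc y hy) (KHom.ext hxy)
  exact congrArg KHom.t this

include hEM in
/-- components of extremal epimorphisms of `KD` are extremal epimorphisms of `D` -/
theorem comp_ext_epi {A Bk : KObj D} (e : A ⟶ Bk) (he : ExtremalEpi e)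
    {ρ : MorFrom Bk.b} (hρ : ρ ∈ Bk.filt.carrier) (hρe : ExtremalEpi ρ.2) :
    ExtremalEpi (KHom.t e ≫ ρ.2) := by
  obtain ⟨V, a, b, ha, hb, hab⟩ := hEM.fact (KHom.t e ≫ ρ.2)
  let ρK : Bk ⟶ kDiscreteObj ρ.1 := KHom.toDisc ρ.2 hρ
  let bK : kDiscreteObj V ⟶ kDiscreteObj ρ.1 := KHom.ofDisc b
  have hbK : Mono bK := (kmono_iff bK).2 hb
  let ld := pbLD ρK bK
  have haA : (⟨V, a⟩ : MorFrom A.b) ∈ A.filt.carrier := by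
    have h1 := KHom.mem' e hρ
    obtain ⟨ε₀, hP, hE, k, hk⟩ := A.red _ h1
    obtain ⟨d, hd, _⟩ := hEM.diag ε₀.2 b a k hE hb (by rw [hab]; exact hk.symm)
    exact A.filt.mem_of_dom hP ⟨d, hd⟩
  let aK : A ⟶ kDiscreteObj V := KHom.toDisc a haA
  let v : ∀ j : CObj, A ⟶ (cospanK ρK bK).obj j :=
    fun j => match j with | CObj.l => e | CObj.r => aK | CObj.o => e ≫ ρK
  have hv : ∀ {j j' : CObj} (α : j ⟶ j'), v j ≫ (cospanK ρK bK).map α = v j' := by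
    intro j j' α
    change CHom _ _ at α; cases α
    · exact Category.comp_id _
    · exact Category.comp_id _
    · exact Category.comp_id _
    · rfl
    · exact KHom.ext hab
  let lft : A ⟶ KLObj ld hEM := KLlift ld hEM v hv
  let pl := KLproj ld hEM CObj.l
  have hl : lft ≫ pl = e := KLlift_fac ld hEM v hv CObj.l
  have hmono_pl : Mono pl := by
    apply (kmono_iff pl).2
    show Mono (Limits.pullback.fst (KHom.t ρK) (KHom.t bK))
    haveI : Mono (KHom.t bK) := hb
    infer_instance
  have hiso : IsIso pl := he.2 lft pl hmono_pl hl
  set w : Bk.b ⟶ V := KHom.t (inv pl ≫ KLproj ld hEM CObj.r) with hw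
  have hwb : w ≫ b = ρ.2 := by
    have h0 := congrArg KHom.t (IsIso.inv_hom_id pl)
    rw [KHom.comp_t, KHom.id_t] at h0
    have hcond : Limits.pullback.snd (KHom.t ρK) (KHom.t bK) ≫ b =
        Limits.pullback.fst (KHom.t ρK) (KHom.t bK) ≫ ρ.2 :=
      (Limits.pullback.condition (f := KHom.t ρK) (g := KHom.t bK)).symm
    show (KHom.t (inv pl) ≫ Limits.pullback.snd (KHom.t ρK) (KHom.t bK)) ≫ b = ρ.2
    erw [Category.assoc, hcond, ← Category.assoc]
    rw [show KHom.t (inv pl) ≫ Limits.pullback.fst (KHom.t ρK) (KHom.t bK) = 𝟙 Bk.b from h0]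
    exact Category.id_comp _
  have hbiso : IsIso b := hρe.2 w b hb hwb
  rw [← hab]
  exact extEpi_comp_iso ha hbiso

variable (A : KObj D) {ι : Type v} (Y : ι → D) (ee : ∀ i, A.b ⟶ Y i)
  (hext : ∀ i, ExtremalEpi (ee i))
  (hcov : ∀ ⦃Z : D⦄ (f : A.b ⟶ Z), ExtremalEpi f → ∃ (i : ι) (φ : Y i ≅ Z), ee i ≫ φ.hom = f)

/-- systems of extremal quotients of `A` -/
abbrev Sys : Type v := Set (Σ i : ι, (A.b ⟶ Y i))

/-- the index category of a system -/
def SysCat (S : Sys A Y) : Type v := {p : Σ i : ι, (A.b ⟶ Y i) // p ∈ S}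

instance {S : Sys A Y} : Category.{v} (SysCat A Y S) where
  Hom p q := {σ : Y p.1.1 ⟶ Y q.1.1 // p.1.2 ≫ σ = q.1.2}
  id p := ⟨𝟙 _, Category.comp_id _⟩
  comp f g := ⟨f.1 ≫ g.1, by rw [← Category.assoc, f.2, g.2]⟩
  id_comp f := Subtype.ext (Category.id_comp _)
  comp_id f := Subtype.ext (Category.comp_id _)
  assoc f g h := Subtype.ext (Category.assoc _ _ _)

/-- the discrete diagram of a system in `KD` -/
def sysDiag (S : Sys A Y) : SysCat A Y S ⥤ KObj D where
  obj p := kDiscreteObj (Y p.1.1)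
  map {p q} σ := KHom.ofDisc (B := kDiscreteObj (Y q.1.1)) σ.1
  map_id p := KHom.ext rfl
  map_comp f g := KHom.ext rfl

/-- the underlying diagram of a system in `D` -/
def sysF (S : Sys A Y) : SysCat A Y S ⥤ D where
  obj p := Y p.1.1
  map σ := σ.1

/-- limit data for a system -/
noncomputable def sysLD (S : Sys A Y) : LimData (sysDiag A Y S) where
  pt := Limits.limit (sysF A Y S)
  lam p := Limits.limit.π (sysF A Y S) p
  w α := Limits.limit.w (sysF A Y S) α
  lift {C} v hv := Limits.limit.lift (sysF A Y S)
    { pt := C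
      π :=
        { app := fun p => v p
          naturality := fun p q σ => by
            have := hv σ
            exact (Category.id_comp _).trans this.symm } }
  fac {C} v hv p := Limits.limit.lift_π _ _
  uniq {C} v hv w' hw' := by
    apply Limits.limit.hom_ext
    intro p
    rw [Limits.limit.lift_π]
    exact hw' p

/-- the limit of a system as an iso-filtered object -/
noncomputable def BSys (S : Sys A Y) : KObj D := KLObj (sysLD A Y S) hEM

theorem sys_lam_mem (S : Sys A Y) (p : SysCat A Y S) {T : D} (w : Y p.1.1 ⟶ T) :
    (⟨T, (sysLD A Y S).lam p ≫ w⟩ : MorFrom (sysLD A Y S).pt) ∈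
      (klimFilt (sysLD A Y S) hEM).carrier :=
  klim_gen_mem (sysLD A Y S) hEM (j := p) (ξ := ⟨T, w⟩) trivial

/-- the canonical morphism from `A` into a system limit -/
noncomputable def eSys (S : Sys A Y)
    (hS : ∀ p ∈ S, (⟨Y p.1, p.2⟩ : MorFrom A.b) ∈ A.filt.carrier) :
    A ⟶ BSys hEM A Y S :=
  KLlift (sysLD A Y S) hEM (fun p => KHom.toDisc p.1.2 (hS p.1 p.2))
    (fun {p q} σ => KHom.ext σ.2)

theorem eSys_lam (S : Sys A Y) (hS) (p : SysCat A Y S) :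
    KHom.t (eSys hEM A Y S hS) ≫ (sysLD A Y S).lam p = p.1.2 :=
  congrArg KHom.t (KLlift_fac (sysLD A Y S) hEM (fun p => KHom.toDisc p.1.2 (hS p.1 p.2))
    (fun {p q} σ => KHom.ext σ.2) p)

end FactMachinery
section PhiMachinery

variable [Limits.HasLimits D] (hEM : EMCat D)
variable (A : KObj D) {ι : Type v} (Y : ι → D) (ee : ∀ i, A.b ⟶ Y i)
  (hext : ∀ i, ExtremalEpi (ee i))
  (hcov : ∀ ⦃Z : D⦄ (f : A.b ⟶ Z), ExtremalEpi f → ∃ (i : ι) (φ : Y i ≅ Z), ee i ≫ φ.hom = f)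

/-- the canonical system of an extremal epimorphism quotient of `A` -/
def Se (Bk : KObj D) (e : A ⟶ Bk) : Sys A Y :=
  {p | ∃ ρ : MorFrom Bk.b, ρ ∈ Bk.filt.carrier ∧ ExtremalEpi ρ.2 ∧
    ∃ ψ : ρ.1 ≅ Y p.1, p.2 = KHom.t e ≫ ρ.2 ≫ ψ.hom}

theorem Se_memA (Bk : KObj D) (e : A ⟶ Bk) :
    ∀ p ∈ Se A Y Bk e, (⟨Y p.1, p.2⟩ : MorFrom A.b) ∈ A.filt.carrier := by
  rintro p ⟨ρ, hρ, hρe, ψ, hp⟩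
  have h1 := A.filt.mem_comp (KHom.mem' e hρ) ψ.hom
  rw [Category.assoc] at h1
  rw [show (⟨Y p.1, p.2⟩ : MorFrom A.b) = ⟨Y p.1, KHom.t e ≫ ρ.2 ≫ ψ.hom⟩ from
    congrArg (Sigma.mk (Y p.1)) hp]
  exact h1

include hcov in
theorem Phi_pack (Bk : KObj D) (e : A ⟶ Bk) (he : ExtremalEpi e) :
    ∃ (Φ : Bk ⟶ BSys hEM A Y (Se A Y Bk e)) (r : BSys hEM A Y (Se A Y Bk e) ⟶ Bk),
      e ≫ Φ = eSys hEM A Y (Se A Y Bk e) (Se_memA A Y Bk e) ∧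
      Φ ≫ r = 𝟙 Bk ∧ r ≫ Φ = 𝟙 (BSys hEM A Y (Se A Y Bk e)) := by
  classical
  set S := Se A Y Bk e with hSdef
  set ld := sysLD A Y S with hld
  have hee : Epi e := he.1
  have sysw : ∀ (p q : SysCat A Y S) (σ : Y p.1.1 ⟶ Y q.1.1), p.1.2 ≫ σ = q.1.2 →
      ld.lam p ≫ σ = ld.lam q := fun p q σ hσ => ld.w (j := p) (j' := q) ⟨σ, hσ⟩
  -- cover choices for extremal elements of the filtration of `Bk`
  have cov : ∀ (ρ : MorFrom Bk.b), ρ ∈ Bk.filt.carrier → ExtremalEpi ρ.2 →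
      ∃ (i : ι) (φ : Y i ≅ ρ.1), ee i ≫ φ.hom = KHom.t e ≫ ρ.2 :=
    fun ρ hρ hρe => hcov _ (comp_ext_epi hEM e he hρ hρe)
  choose covI covφ covspec using cov
  let pOf : ∀ (ρ : MorFrom Bk.b), ρ ∈ Bk.filt.carrier → ExtremalEpi ρ.2 → SysCat A Y S :=
    fun ρ hρ hρe => ⟨⟨covI ρ hρ hρe, KHom.t e ≫ ρ.2 ≫ (covφ ρ hρ hρe).inv⟩,
      ⟨ρ, hρ, hρe, (covφ ρ hρ hρe).symm, rfl⟩⟩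
  let cM : ∀ (ρ : MorFrom Bk.b), ρ ∈ Bk.filt.carrier → ExtremalEpi ρ.2 → (ld.pt ⟶ ρ.1) :=
    fun ρ hρ hρe => ld.lam (pOf ρ hρ hρe) ≫ (covφ ρ hρ hρe).hom
  -- witnesses for arbitrary elements of the system
  have legspec : ∀ p : SysCat A Y S, ∃ (ρ' : MorFrom Bk.b), ρ' ∈ Bk.filt.carrier ∧
      ExtremalEpi ρ'.2 ∧ ∃ ψ' : ρ'.1 ≅ Y p.1.1, p.1.2 = KHom.t e ≫ ρ'.2 ≫ ψ'.hom :=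
    fun p => p.2
  choose ρw hρw hρwe ψwex using legspec
  choose ψw hψw using fun p => ψwex p
  let legT : ∀ p : SysCat A Y S, Bk.b ⟶ Y p.1.1 := fun p => (ρw p).2 ≫ (ψw p).hom
  have legT_e : ∀ p, KHom.t e ≫ legT p = p.1.2 := by
    intro p
    rw [hψw p]
  have legT_mem : ∀ (p : SysCat A Y S) {T : D} (w : Y p.1.1 ⟶ T),
      (⟨T, legT p ≫ w⟩ : MorFrom Bk.b) ∈ Bk.filt.carrier := by
    intro p T w
    have h2 := Bk.filt.mem_comp (hρw p) ((ψw p).hom ≫ w)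
    rw [← Category.assoc] at h2
    exact h2
  have legT_mem' : ∀ p : SysCat A Y S, (⟨Y p.1.1, legT p⟩ : MorFrom Bk.b) ∈ Bk.filt.carrier := by
    intro p
    have := legT_mem p (𝟙 _)
    rwa [Category.comp_id] at this
  -- the comparison morphism
  have hv : ∀ {p q : SysCat A Y S} (σ : p ⟶ q),
      KHom.toDisc (legT p) (legT_mem' p) ≫ (sysDiag A Y S).map σ =
        KHom.toDisc (legT q) (legT_mem' q) := by
    intro p q σ
    apply KHom.ext
    show legT p ≫ σ.1 = legT q
    refine kepi_cancel e hee _ _ (legT_mem p σ.1) (legT_mem' q) ?_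
    rw [← Category.assoc, legT_e p, σ.2, ← legT_e q]
  let Φ : Bk ⟶ BSys hEM A Y S :=
    KLlift ld hEM (fun p => KHom.toDisc (legT p) (legT_mem' p)) hv
  have Φ_lam : ∀ p, KHom.t Φ ≫ ld.lam p = legT p := fun p =>
    congrArg KHom.t (KLlift_fac ld hEM _ hv p)
  have Φ_mem : ∀ γ ∈ (klimFilt ld hEM).carrier,
      (⟨γ.1, KHom.t Φ ≫ γ.2⟩ : MorFrom Bk.b) ∈ Bk.filt.carrier := fun γ hγ => KHom.mem' Φ hγ
  have Φ_cM : ∀ ρ hρ hρe, KHom.t Φ ≫ cM ρ hρ hρe = ρ.2 := by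
    intro ρ hρ hρe
    show KHom.t Φ ≫ ld.lam (pOf ρ hρ hρe) ≫ (covφ ρ hρ hρe).hom = ρ.2
    erw [← Category.assoc, Φ_lam]
    refine kepi_cancel e hee _ _ (legT_mem _ _) hρ ?_
    erw [← Category.assoc, legT_e]
    show (KHom.t e ≫ ρ.2 ≫ (covφ ρ hρ hρe).inv) ≫ (covφ ρ hρ hρe).hom = KHom.t e ≫ ρ.2
    simp
  have cM_nat : ∀ ρs hρs hρse ρ₀ hρ₀ hρ₀e (s : Sigma.fst ρs ⟶ Sigma.fst ρ₀),
      ρs.2 ≫ s = ρ₀.2 → cM ρs hρs hρse ≫ s = cM ρ₀ hρ₀ hρ₀e := by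
    intro ρs hρs hρse ρ₀ hρ₀ hρ₀e s hs
    have hcond : (pOf ρs hρs hρse).1.2 ≫
        ((covφ ρs hρs hρse).hom ≫ s ≫ (covφ ρ₀ hρ₀ hρ₀e).inv) = (pOf ρ₀ hρ₀ hρ₀e).1.2 := by
      show (KHom.t e ≫ ρs.2 ≫ (covφ ρs hρs hρse).inv) ≫ _ =
        KHom.t e ≫ ρ₀.2 ≫ (covφ ρ₀ hρ₀ hρ₀e).inv
      rw [← hs]
      simp [Category.assoc]
    have h1 := sysw (pOf ρs hρs hρse) (pOf ρ₀ hρ₀ hρ₀e) _ hcond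
    show (ld.lam (pOf ρs hρs hρse) ≫ (covφ ρs hρs hρse).hom) ≫ s =
      ld.lam (pOf ρ₀ hρ₀ hρ₀e) ≫ (covφ ρ₀ hρ₀ hρ₀e).hom
    calc (ld.lam (pOf ρs hρs hρse) ≫ (covφ ρs hρs hρse).hom) ≫ s
        = (ld.lam (pOf ρs hρs hρse) ≫
            ((covφ ρs hρs hρse).hom ≫ s ≫ (covφ ρ₀ hρ₀ hρ₀e).inv)) ≫ (covφ ρ₀ hρ₀ hρ₀e).hom := by
          exact (Category.assoc _ _ _).trans ((whisker_eq _ ((Category.assoc _ _ _).trans (whisker_eq _ ((Category.assoc _ _ _).trans ((whisker_eq _ (Iso.inv_hom_id _)).trans (Category.comp_id _))))).symm).trans (Category.assoc _ _ _).symm)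
      _ = ld.lam (pOf ρ₀ hρ₀ hρ₀e) ≫ (covφ ρ₀ hρ₀ hρ₀e).hom := by erw [h1]; rfl
  -- reconstruction of tuple morphisms from their `Φ` composites
  have RPhi : ∀ (χ : MorFrom ld.pt), pairCl (klimGens ld) χ →
      ∀ (ρ₀ : MorFrom Bk.b) (hρ₀ : ρ₀ ∈ Bk.filt.carrier) (hρ₀e : ExtremalEpi ρ₀.2)
        (k : ρ₀.1 ⟶ χ.1), ρ₀.2 ≫ k = KHom.t Φ ≫ χ.2 → cM ρ₀ hρ₀ hρ₀e ≫ k = χ.2 := by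
    intro χ hχ
    induction hχ with
    | @base γ h =>
        obtain ⟨p, ξ, hξ, rfl⟩ := h
        intro ρ₀ hρ₀ hρ₀e k hk
        have hk2 : ρ₀.2 ≫ k = legT p ≫ ξ.2 := by
          rw [hk]
          show KHom.t Φ ≫ ld.lam p ≫ ξ.2 = _
          erw [← Category.assoc, Φ_lam]; rfl
        obtain ⟨ζ, hζ, hd₀, hd'⟩ := Bk.filt.directed' ρ₀ hρ₀ (ρw p) (hρw p)
        obtain ⟨ρs, hρs, hρse, hdζ⟩ := Bk.red ζ hζ
        obtain ⟨s₀, hs₀⟩ := hdζ.trans hd₀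
        obtain ⟨s', hs'⟩ := hdζ.trans hd'
        have hepi : Epi ρs.2 := hρse.1
        have key : s₀ ≫ k = s' ≫ (ψw p).hom ≫ ξ.2 := by
          apply hepi.left_cancellation
          rw [← Category.assoc, ← Category.assoc, hs₀, hs', hk2]
          show ((ρw p).2 ≫ (ψw p).hom) ≫ ξ.2 = (ρw p).2 ≫ (ψw p).hom ≫ ξ.2
          erw [Category.assoc]
        have hlast : cM (ρw p) (hρw p) (hρwe p) ≫ (ψw p).hom = ld.lam p := by
          have hcond2 : (pOf (ρw p) (hρw p) (hρwe p)).1.2 ≫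
              ((covφ (ρw p) (hρw p) (hρwe p)).hom ≫ (ψw p).hom) = p.1.2 := by
            show (KHom.t e ≫ (ρw p).2 ≫ (covφ (ρw p) (hρw p) (hρwe p)).inv) ≫ _ = p.1.2
            rw [hψw p]
            simp [Category.assoc]
          have h2 := sysw (pOf (ρw p) (hρw p) (hρwe p)) p _ hcond2
          show (ld.lam (pOf (ρw p) (hρw p) (hρwe p)) ≫
            (covφ (ρw p) (hρw p) (hρwe p)).hom) ≫ (ψw p).hom = ld.lam p
          erw [Category.assoc]
          exact h2
        show cM ρ₀ hρ₀ hρ₀e ≫ k = ld.lam p ≫ ξ.2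
        calc cM ρ₀ hρ₀ hρ₀e ≫ k
            = (cM ρs hρs hρse ≫ s₀) ≫ k := by
              rw [cM_nat ρs hρs hρse ρ₀ hρ₀ hρ₀e s₀ hs₀]
          _ = cM ρs hρs hρse ≫ s' ≫ (ψw p).hom ≫ ξ.2 := by
              rw [Category.assoc, key]
          _ = (cM (ρw p) (hρw p) (hρwe p) ≫ (ψw p).hom) ≫ ξ.2 := by
              rw [← cM_nat ρs hρs hρse (ρw p) (hρw p) (hρwe p) s' hs']
              simp [Category.assoc]
              exact ((Category.assoc _ _ _).trans (whisker_eq _ (Category.assoc _ _ _))).symm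
          _ = ld.lam p ≫ ξ.2 := by rw [hlast]; rfl
    | term =>
        intro ρ₀ hρ₀ hρ₀e k hk
        exact Limits.terminal.hom_ext _ _
    | @pair χ₁ χ₂ h₁ h₂ ih₁ ih₂ =>
        intro ρ₀ hρ₀ hρ₀e k hk
        apply Limits.prod.hom_ext
        · rw [Category.assoc, Limits.prod.lift_fst]
          refine ih₁ ρ₀ hρ₀ hρ₀e (k ≫ Limits.prod.fst) ?_
          erw [← Category.assoc, hk, Category.assoc]
          show KHom.t Φ ≫ Limits.prod.lift χ₁.2 χ₂.2 ≫ Limits.prod.fst = KHom.t Φ ≫ χ₁.2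
          erw [Limits.prod.lift_fst]
        · rw [Category.assoc, Limits.prod.lift_snd]
          refine ih₂ ρ₀ hρ₀ hρ₀e (k ≫ Limits.prod.snd) ?_
          erw [← Category.assoc, hk, Category.assoc]
          show KHom.t Φ ≫ Limits.prod.lift χ₁.2 χ₂.2 ≫ Limits.prod.snd = KHom.t Φ ≫ χ₂.2
          erw [Limits.prod.lift_snd]
  -- composites of `Φ` with extremal epimorphisms of the limit filtration are epi
  have phiepi : ∀ (ε : MorFrom ld.pt), ExtremalEpi ε.2 → ∀ (χ : MorFrom ld.pt),
      pairCl (klimGens ld) χ → ∀ (m₀ : ε.1 ⟶ χ.1), Mono m₀ → ε.2 ≫ m₀ = χ.2 →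
      Epi (KHom.t Φ ≫ ε.2) := by
    intro ε hεe χ hχ m₀ hm₀ hεm₀
    constructor
    intro U u v' huv
    have hψ : Limits.equalizer.lift _ huv ≫ Limits.equalizer.ι u v' = KHom.t Φ ≫ ε.2 :=
      Limits.equalizer.lift_ι _ _
    have hχBk : (⟨χ.1, KHom.t Φ ≫ χ.2⟩ : MorFrom Bk.b) ∈ Bk.filt.carrier :=
      Φ_mem χ (mem_mkFilt_of_pairCl hEM hχ)
    obtain ⟨ε₀, hε₀, hε₀e, k₀, hk₀⟩ := Bk.red _ hχBk
    obtain ⟨d₀, hd₀, hd₀'⟩ := hEM.diag ε₀.2 (Limits.equalizer.ι u v' ≫ m₀)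
      (Limits.equalizer.lift _ huv) k₀ hε₀e (mono_comp _ _)
      (by erw [← Category.assoc, hψ, Category.assoc, hεm₀]; exact hk₀.symm)
    have hR := RPhi χ hχ ε₀ hε₀ hε₀e k₀ hk₀
    have hfac : (cM ε₀ hε₀ hε₀e ≫ d₀ ≫ Limits.equalizer.ι u v') ≫ m₀ = ε.2 ≫ m₀ := by
      rw [hεm₀]
      simp only [Category.assoc]
      rw [hd₀', hR]
    have hfac' := hm₀.right_cancellation _ _ hfac
    rw [← Category.assoc] at hfac'
    have hjiso : IsIso (Limits.equalizer.ι u v') := hεe.2 _ _ inferInstance hfac'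
    rw [← cancel_epi (Limits.equalizer.ι u v')]
    exact Limits.equalizer.condition u v'
  -- `Φ` is an epimorphism relative to `KD`
  have Φ_kepi : ∀ {Wk : KObj D} (x y : BSys hEM A Y S ⟶ Wk), Φ ≫ x = Φ ≫ y → x = y := by
    intro Wk x y hxy
    apply KHom.ext
    apply Wk.hom_ext
    intro π hπ
    have hx := KHom.mem' x hπ
    have hy := KHom.mem' y hπ
    obtain ⟨ζ, hζ, hdx, hdy⟩ := (klimFilt ld hEM).directed' _ hx _ hy
    obtain ⟨ε, hεe, ⟨χ, hχ, m₀, hm₀, hεm₀⟩, hdζ⟩ := hζ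
    obtain ⟨σ₁, hσ₁⟩ := hdζ.trans hdx
    obtain ⟨σ₂, hσ₂⟩ := hdζ.trans hdy
    have hepi := phiepi ε hεe χ hχ m₀ hm₀ hεm₀
    have hσ₁' : ε.2 ≫ σ₁ = KHom.t x ≫ π.2 := hσ₁
    have hσ₂' : ε.2 ≫ σ₂ = KHom.t y ≫ π.2 := hσ₂
    have hxy' : KHom.t Φ ≫ KHom.t x = KHom.t Φ ≫ KHom.t y := by
      have := congrArg KHom.t hxy
      simpa using this
    have hc : (KHom.t Φ ≫ ε.2) ≫ σ₁ = (KHom.t Φ ≫ ε.2) ≫ σ₂ := by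
      erw [Category.assoc, Category.assoc, hσ₁', hσ₂', ← Category.assoc, ← Category.assoc, hxy']
    have hs := hepi.left_cancellation _ _ hc
    show KHom.t x ≫ π.2 = KHom.t y ≫ π.2
    rw [← hσ₁', ← hσ₂', hs]
  -- the inverse of `Φ`
  have cDex : ∀ (δ : MorFrom Bk.b), δ ∈ Bk.filt.carrier →
      ∃ (ρ : MorFrom Bk.b) (hρ : ρ ∈ Bk.filt.carrier) (hρe : ExtremalEpi ρ.2)
        (s : ρ.1 ⟶ δ.1), ρ.2 ≫ s = δ.2 := by
    intro δ hδ
    obtain ⟨ρ, hρ, hρe, s, hs⟩ := Bk.red δ hδ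
    exact ⟨ρ, hρ, hρe, s, hs⟩
  choose ρD hρD hρDe sD hsD using cDex
  let cD : ∀ (δ : MorFrom Bk.b), δ ∈ Bk.filt.carrier → (ld.pt ⟶ δ.1) :=
    fun δ hδ => cM (ρD δ hδ) (hρD δ hδ) (hρDe δ hδ) ≫ sD δ hδ
  have Φ_cD : ∀ δ hδ, KHom.t Φ ≫ cD δ hδ = δ.2 := by
    intro δ hδ
    show KHom.t Φ ≫ cM (ρD δ hδ) (hρD δ hδ) (hρDe δ hδ) ≫ sD δ hδ = δ.2
    erw [← Category.assoc, Φ_cM, hsD]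
  have cD_mem : ∀ δ hδ {T : D} (w : δ.1 ⟶ T),
      (⟨T, cD δ hδ ≫ w⟩ : MorFrom ld.pt) ∈ (klimFilt ld hEM).carrier := by
    intro δ hδ T w
    have h1 := sys_lam_mem hEM A Y S (pOf (ρD δ hδ) (hρD δ hδ) (hρDe δ hδ))
      ((covφ (ρD δ hδ) (hρD δ hδ) (hρDe δ hδ)).hom ≫ sD δ hδ ≫ w)
    have h2 : cD δ hδ ≫ w = ld.lam (pOf (ρD δ hδ) (hρD δ hδ) (hρDe δ hδ)) ≫
        ((covφ (ρD δ hδ) (hρD δ hδ) (hρDe δ hδ)).hom ≫ sD δ hδ ≫ w) := by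
      show ((ld.lam (pOf (ρD δ hδ) (hρD δ hδ) (hρDe δ hδ)) ≫
        (covφ (ρD δ hδ) (hρD δ hδ) (hρDe δ hδ)).hom) ≫ sD δ hδ) ≫ w = _
      exact (Category.assoc _ _ _).trans (Category.assoc _ _ _)
    rw [h2]
    exact h1
  have cD_mem' : ∀ δ hδ, (⟨δ.1, cD δ hδ⟩ : MorFrom ld.pt) ∈ (klimFilt ld hEM).carrier := by
    intro δ hδ
    have := cD_mem δ hδ (𝟙 _)
    rwa [Category.comp_id] at this
  have cD_nat : ∀ (δ δ' : MorFrom Bk.b) (hδ : δ ∈ Bk.filt.carrier) (hδ' : δ' ∈ Bk.filt.carrier)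
      (g : δ.1 ⟶ δ'.1), δ.2 ≫ g = δ'.2 → cD δ hδ ≫ g = cD δ' hδ' := by
    intro δ δ' hδ hδ' g hg
    have hKx : Φ ≫ KHom.toDisc (cD δ hδ ≫ g) (cD_mem δ hδ g) =
        Φ ≫ KHom.toDisc (cD δ' hδ') (cD_mem' δ' hδ') := by
      apply KHom.ext
      show KHom.t Φ ≫ cD δ hδ ≫ g = KHom.t Φ ≫ cD δ' hδ'
      erw [← Category.assoc, Φ_cD, Φ_cD, hg]
    have := Φ_kepi _ _ hKx
    exact congrArg KHom.t this
  let rT : ld.pt ⟶ Bk.b := Bk.lim.lift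
    { pt := ld.pt
      π :=
        { app := fun δ => cD δ.1 δ.2
          naturality := fun δ δ' g => by
            have := cD_nat δ.1 δ'.1 δ.2 δ'.2 g.1 g.2
            simpa [FiltDiagram] using this.symm } }
  have rT_fac : ∀ (δ : MorFrom Bk.b) (hδ : δ ∈ Bk.filt.carrier), rT ≫ δ.2 = cD δ hδ :=
    fun δ hδ => Bk.lim.fac _ ⟨δ, hδ⟩
  let r : BSys hEM A Y S ⟶ Bk :=
    KHom.mk <|
      ⟨rT, by
        intro δ hδ
        show (⟨δ.1, rT ≫ δ.2⟩ : MorFrom ld.pt) ∈ (klimFilt ld hEM).carrier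
        rw [rT_fac δ hδ]
        exact cD_mem' δ hδ⟩
  refine ⟨Φ, r, ?_, ?_, ?_⟩
  · apply KL_hom_ext
    intro p
    apply KHom.ext
    show (KHom.t e ≫ KHom.t Φ) ≫ ld.lam p = KHom.t (eSys hEM A Y S (Se_memA A Y Bk e)) ≫ ld.lam p
    erw [Category.assoc, Φ_lam, legT_e, eSys_lam]
  · apply KHom.ext
    apply Bk.hom_ext
    intro δ hδ
    show (KHom.t Φ ≫ rT) ≫ δ.2 = KHom.t (𝟙 Bk) ≫ δ.2
    erw [Category.assoc, rT_fac δ hδ, Φ_cD, KHom.id_t, Category.id_comp]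
  · apply Φ_kepi
    rw [← Category.assoc]
    have h1 : Φ ≫ r = 𝟙 Bk := by
      apply KHom.ext
      apply Bk.hom_ext
      intro δ hδ
      show (KHom.t Φ ≫ rT) ≫ δ.2 = KHom.t (𝟙 Bk) ≫ δ.2
      erw [Category.assoc, rT_fac δ hδ, Φ_cD, KHom.id_t, Category.id_comp]
    rw [h1, Category.id_comp, Category.comp_id]

end PhiMachinery
section Final

variable [Limits.HasLimits D] [Limits.HasColimits D]

theorem kfact (hEM : EMCat D) (hecwp : ECWP D) {A X : KObj D} (f : A ⟶ X) :
    ∃ (Z : KObj D) (e : A ⟶ Z) (m : Z ⟶ X), ExtremalEpi e ∧ Mono m ∧ e ≫ m = f := by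
  classical
  obtain ⟨ι, Y, ee, hext, hcov⟩ := hecwp A.b
  let idx : Type v := {S : Sys A Y //
    ∃ (hS : ∀ p ∈ S, (⟨Y p.1, p.2⟩ : MorFrom A.b) ∈ A.filt.carrier),
      ExtremalEpi (eSys hEM A Y S hS) ∧ ∃ gK : BSys hEM A Y S ⟶ X, eSys hEM A Y S hS ≫ gK = f}
  have hSa : ∀ σ : idx, ∀ p ∈ σ.1, (⟨Y p.1, p.2⟩ : MorFrom A.b) ∈ A.filt.carrier :=
    fun σ => σ.2.choose
  let eI : ∀ σ : idx, A ⟶ BSys hEM A Y σ.1 := fun σ => eSys hEM A Y σ.1 (hSa σ)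
  have heI : ∀ σ, ExtremalEpi (eI σ) := fun σ => σ.2.choose_spec.1
  have hgI : ∀ σ, ∃ gK : BSys hEM A Y σ.1 ⟶ X, eI σ ≫ gK = f := fun σ => σ.2.choose_spec.2
  choose gI hgIf using hgI
  let GW : Limits.WidePushoutShape idx ⥤ KObj D :=
    Limits.WidePushoutShape.wideSpan A (fun σ => BSys hEM A Y σ.1) eI
  let Bb : KObj D := KColim GW hEM hecwp
  let ebar : A ⟶ Bb := KCleg GW hEM hecwp none
  let q_ : ∀ σ : idx, BSys hEM A Y σ.1 ⟶ Bb := fun σ => KCleg GW hEM hecwp (some σ)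
  have hleg : ∀ σ, eI σ ≫ q_ σ = ebar := by
    intro σ
    have h1 := KCleg_w GW hEM hecwp (Limits.WidePushoutShape.Hom.init σ)
    rw [show GW.map (Limits.WidePushoutShape.Hom.init σ) = eI σ from rfl] at h1
    exact h1
  -- the mediating morphism to `X`
  let wmap : ∀ j, GW.obj j ⟶ X := fun j => Option.casesOn j f (fun σ => gI σ)
  have hwmap : ∀ {j j' : Limits.WidePushoutShape idx} (α : j ⟶ j'),
      GW.map α ≫ wmap j' = wmap j := by
    intro j j' α
    change Limits.WidePushoutShape.Hom _ _ at α; cases α with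
    | id Z =>
        rw [Limits.WidePushoutShape.hom_id, GW.map_id]
        exact Category.id_comp _
    | init σ =>
        rw [show GW.map (Limits.WidePushoutShape.Hom.init σ) = eI σ from rfl]
        exact hgIf σ
  let mbar : Bb ⟶ X := KCdesc GW hEM hecwp wmap hwmap
  have hfm : ebar ≫ mbar = f := KCdesc_fac GW hEM hecwp wmap hwmap none
  have hqm : ∀ σ, q_ σ ≫ mbar = gI σ := fun σ => KCdesc_fac GW hEM hecwp wmap hwmap (some σ)
  -- `ebar` is an epimorphism
  have hebar_epi : Epi ebar := by
    constructor
    intro W x y hxy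
    apply KC_hom_ext GW hEM hecwp
    intro j
    cases j with
    | none => exact hxy
    | some σ =>
        apply (heI σ).1.left_cancellation
        erw [← Category.assoc, ← Category.assoc]
        show (eI σ ≫ q_ σ) ≫ x = (eI σ ≫ q_ σ) ≫ y
        rw [hleg σ]
        exact hxy
  -- `ebar` is an extremal epimorphism
  have hebar : ExtremalEpi ebar := by
    refine ⟨hebar_epi, ?_⟩
    intro V g' m' hm' hgm'
    have hsq : ∀ σ, g' ≫ m' = eI σ ≫ q_ σ := fun σ => by rw [hgm', hleg σ]
    have hdd : ∀ σ, ∃ d : BSys hEM A Y σ.1 ⟶ V, eI σ ≫ d = g' ∧ d ≫ m' = q_ σ :=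
      fun σ => kdiag hEM (eI σ) m' g' (q_ σ) (heI σ) hm' (hsq σ)
    choose dd hd1 hd2 using hdd
    let wd : ∀ j, GW.obj j ⟶ V := fun j => Option.casesOn j g' (fun σ => dd σ)
    have hwd : ∀ {j j' : Limits.WidePushoutShape idx} (α : j ⟶ j'),
        GW.map α ≫ wd j' = wd j := by
      intro j j' α
      change Limits.WidePushoutShape.Hom _ _ at α; cases α with
      | id Z =>
          rw [Limits.WidePushoutShape.hom_id, GW.map_id]
          exact Category.id_comp _
      | init σ =>
          rw [show GW.map (Limits.WidePushoutShape.Hom.init σ) = eI σ from rfl]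
          exact hd1 σ
    let dbar : Bb ⟶ V := KCdesc GW hEM hecwp wd hwd
    have hdbar : ∀ j, KCleg GW hEM hecwp j ≫ dbar = wd j := KCdesc_fac GW hEM hecwp wd hwd
    have hret : dbar ≫ m' = 𝟙 Bb := by
      apply KC_hom_ext GW hEM hecwp
      intro j
      rw [← Category.assoc, Category.comp_id]
      cases j with
      | none =>
          show (ebar ≫ dbar) ≫ m' = ebar
          erw [hdbar none]
          show g' ≫ m' = ebar
          exact hgm'
      | some σ =>
          show (q_ σ ≫ dbar) ≫ m' = q_ σ
          erw [hdbar (some σ)]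
          exact hd2 σ
    exact isIso_of_retr_of_mono hret hm'
  by_cases hmono : Mono (KHom.t mbar)
  · exact ⟨Bb, ebar, mbar, hebar, (kmono_iff mbar).2 hmono, hfm⟩
  · exfalso
    have hex : ∃ (C' : D) (u v' : C' ⟶ Bb.b),
        u ≫ KHom.t mbar = v' ≫ KHom.t mbar ∧ u ≠ v' := by
      by_contra hne
      push_neg at hne
      exact hmono ⟨fun {Z} u v huv => hne Z u v huv⟩
    obtain ⟨C', u, v', huv, hne⟩ := hex
    let aK : kDiscreteObj C' ⟶ Bb := KHom.ofDisc u
    let bK : kDiscreteObj C' ⟶ Bb := KHom.ofDisc v'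
    let GP := Limits.parallelPair aK bK
    let Q : KObj D := KColim GP hEM hecwp
    let q : Bb ⟶ Q := KCleg GP hEM hecwp Limits.WalkingParallelPair.one
    have hq1 : aK ≫ q = KCleg GP hEM hecwp Limits.WalkingParallelPair.zero := by
      have := KCleg_w GP hEM hecwp Limits.WalkingParallelPairHom.left
      rw [show GP.map Limits.WalkingParallelPairHom.left = aK from rfl] at this
      exact this
    have hq2 : bK ≫ q = KCleg GP hEM hecwp Limits.WalkingParallelPair.zero := by
      have := KCleg_w GP hEM hecwp Limits.WalkingParallelPairHom.right
      rw [show GP.map Limits.WalkingParallelPairHom.right = bK from rfl] at this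
      exact this
    have hab : aK ≫ q = bK ≫ q := hq1.trans hq2.symm
    have hqepi : Epi q := by
      constructor
      intro W x y hxy
      apply KC_hom_ext GP hEM hecwp
      intro j
      cases j with
      | one => exact hxy
      | zero =>
          rw [← hq1, Category.assoc, Category.assoc, hxy]
    have hqext : ExtremalEpi q := by
      refine ⟨hqepi, ?_⟩
      intro V g2 m2 hm2 hgm2
      have hcoeq : aK ≫ g2 = bK ≫ g2 := by
        apply hm2.right_cancellation
        rw [Category.assoc, Category.assoc, hgm2]
        exact hab
      let wq : ∀ j, GP.obj j ⟶ V :=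
        fun j => Limits.WalkingParallelPair.casesOn j (aK ≫ g2) g2
      have hwq : ∀ {j j' : Limits.WalkingParallelPair} (α : j ⟶ j'),
          GP.map α ≫ wq j' = wq j := by
        intro j j' α
        change Limits.WalkingParallelPairHom _ _ at α; cases α with
        | left => exact rfl
        | right => exact hcoeq.symm
        | id =>
            rw [show GP.map (Limits.WalkingParallelPairHom.id _) = 𝟙 _ from GP.map_id _]
            exact Category.id_comp _
      let wQ : Q ⟶ V := KCdesc GP hEM hecwp wq hwq
      have hqw : q ≫ wQ = g2 := KCdesc_fac GP hEM hecwp wq hwq Limits.WalkingParallelPair.one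
      have hret : wQ ≫ m2 = 𝟙 Q := by
        apply hqepi.left_cancellation
        rw [← Category.assoc, hqw, hgm2, Category.comp_id]
      exact isIso_of_retr_of_mono hret hm2
    let wm : ∀ j, GP.obj j ⟶ X :=
      fun j => Limits.WalkingParallelPair.casesOn j (aK ≫ mbar) mbar
    have hwm : ∀ {j j' : Limits.WalkingParallelPair} (α : j ⟶ j'),
        GP.map α ≫ wm j' = wm j := by
      intro j j' α
      change Limits.WalkingParallelPairHom _ _ at α; cases α with
      | left => exact rfl
      | right => exact KHom.ext huv.symm
      | id =>
          rw [show GP.map (Limits.WalkingParallelPairHom.id _) = 𝟙 _ from GP.map_id _]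
          exact Category.id_comp _
    let m2 : Q ⟶ X := KCdesc GP hEM hecwp wm hwm
    have hqm2 : q ≫ m2 = mbar := KCdesc_fac GP hEM hecwp wm hwm Limits.WalkingParallelPair.one
    have heq : ExtremalEpi (ebar ≫ q) :=
      extEpi_comp (fun e m g h he hm hsq => kdiag hEM e m g h he hm hsq) hebar hqext
    obtain ⟨Φ, r, hEΦ, hΦr, hrΦ⟩ := Phi_pack hEM A Y ee hcov Q (ebar ≫ q) heq
    have hΦiso : IsIso Φ := ⟨r, hΦr, hrΦ⟩
    have hEext : ExtremalEpi (eSys hEM A Y (Se A Y Q (ebar ≫ q)) (Se_memA A Y Q (ebar ≫ q))) := by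
      rw [← hEΦ]
      exact extEpi_comp_iso heq hΦiso
    have hfeS : eSys hEM A Y (Se A Y Q (ebar ≫ q)) (Se_memA A Y Q (ebar ≫ q)) ≫ (r ≫ m2) = f := by
      rw [← hEΦ]
      rw [show ((ebar ≫ q) ≫ Φ) ≫ r ≫ m2 = (ebar ≫ q) ≫ (Φ ≫ r) ≫ m2 by simp [Category.assoc]]
      rw [hΦr, Category.id_comp, Category.assoc, hqm2]
      exact hfm
    let σs : idx := ⟨Se A Y Q (ebar ≫ q), Se_memA A Y Q (ebar ≫ q), hEext, ⟨r ≫ m2, hfeS⟩⟩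
    have heIσ : eI σs = eSys hEM A Y (Se A Y Q (ebar ≫ q)) (Se_memA A Y Q (ebar ≫ q)) := rfl
    have hfin : ebar ≫ (q ≫ Φ ≫ q_ σs) = ebar ≫ 𝟙 Bb := by
      rw [Category.comp_id]
      calc ebar ≫ q ≫ Φ ≫ q_ σs
          = ((ebar ≫ q) ≫ Φ) ≫ q_ σs := by simp [Category.assoc]
        _ = eSys hEM A Y (Se A Y Q (ebar ≫ q)) (Se_memA A Y Q (ebar ≫ q)) ≫ q_ σs := by
              rw [hEΦ]
        _ = eI σs ≫ q_ σs := by rw [heIσ]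
        _ = ebar := hleg σs
    have hsplit : q ≫ (Φ ≫ q_ σs) = 𝟙 Bb := hebar_epi.left_cancellation _ _ hfin
    have hqiso : IsIso q := isIso_of_sect_of_epi hsplit hqepi
    have haKbK : aK = bK := by
      haveI := hqiso
      rw [← cancel_mono q]
      exact hab
    exact hne (congrArg KHom.t haKbK)

end Final

/-- `KD` is an (extremal epi, mono) category. -/
theorem kobj_em_category [Limits.HasLimits D] [Limits.HasColimits D]
    (hecwp : ECWP D) (hEM : EMCat D) :
    EMCat (KObj D) := by
  constructor
  · intro Ao Xo f
    exact kfact hEM hecwp f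
  · intro A B Z X e m g h he hm hsq
    exact kdiag hEM e m g h he hm hsq

end FilteredCats
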